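/- arXiv:2004.10357 — 6 statements merged into one kernel-verified Lean document; each statement's English description precedes it below -/
import Mathlib

section
/- Let 𝔽_q be a finite field with q elements, q odd, such that -1 is not a square in 𝔽_q. Then the quadratic extension 𝔽_{q²} equals 𝔽_q adjoined a square root of -1; moreover, if d is the maximal integer such that 𝔽_{q²} contains a primitive 2^d-th root of unity ρ, then the norm N_{𝔽_{q²}/𝔽_q}(ρ) = -1. -/
open Module

lemma norm_formula (F F2 : Type) [Field F] [Fintype F] [Field F2] [Fintype F2]
    [Algebra F F2] (hdim : Module.finrank F F2 = 2) (x : F2) :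
    algebraMap F F2 (Algebra.norm F x) = x * x ^ (Fintype.card F) := by
  classical
  haveI : FiniteDimensional F F2 := Module.Finite.of_finite
  set p := ringChar F with hpdef
  haveI : CharP F p := ringChar.charP F
  haveI : CharP F2 p := charP_of_injective_algebraMap' F p
  obtain ⟨n, hp, hcard⟩ := FiniteField.card F p
  haveI : ExpChar F2 p := ExpChar.prime hp
  set q := Fintype.card F with hqdef
  -- the Frobenius algebra equivalence
  have commutes : ∀ a : F, iterateFrobenius F2 p n (algebraMap F F2 a) = algebraMap F F2 a := by
    intro a
    rw [iterateFrobenius_def, ← map_pow, ← hcard, FiniteField.pow_card]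
  let g : F2 →ₐ[F] F2 := { (iterateFrobenius F2 p n) with commutes' := commutes }
  have hgdef : ∀ y : F2, g y = y ^ q := by
    intro y; show iterateFrobenius F2 p n y = y ^ q
    rw [iterateFrobenius_def, hcard]
  have hbij : Function.Bijective g :=
    Finite.injective_iff_bijective.mp (g : F2 →+* F2).injective
  let σ : F2 ≃ₐ[F] F2 := AlgEquiv.ofBijective g hbij
  have hσ : ∀ y : F2, σ y = y ^ q := hgdef
  -- σ ≠ 1
  have hq2 : 2 ≤ q := Fintype.one_lt_card
  have hcard2 : Fintype.card F2 = q ^ 2 := by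
    rw [card_eq_pow_finrank (K := F) (V := F2), hdim]
  have hσne : σ ≠ 1 := by
    intro h
    obtain ⟨u, hu⟩ := IsCyclic.exists_generator (α := F2ˣ)
    have hou : orderOf u = q ^ 2 - 1 := by
      rw [orderOf_eq_card_of_forall_mem_zpowers hu, Nat.card_eq_fintype_card, Fintype.card_units, hcard2]
    have h1 : (u : F2) ^ q = (u : F2) := by
      have := congrArg (fun f : F2 ≃ₐ[F] F2 => f (u : F2)) h
      simpa [hσ] using this
    have h2 : u ^ (q - 1) = 1 := by
      have h3 : u ^ q = u := by ext; push_cast; exact h1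
      have h4 : u ^ (q - 1) * u = u := by
        rw [← pow_succ, Nat.sub_add_cancel (by omega)]; exact h3
      exact mul_right_cancel (h4.trans (one_mul u).symm)
    have h5 : q ^ 2 - 1 ∣ q - 1 := hou ▸ orderOf_dvd_of_pow_eq_one h2
    have h6 : q ^ 2 - 1 ≤ q - 1 := Nat.le_of_dvd (by omega) h5
    have : q ^ 2 ≤ q := by omega
    nlinarith
  -- the automorphism group is {1, σ}
  have hcardaut : Fintype.card (F2 ≃ₐ[F] F2) = 2 := by
    rw [← Nat.card_eq_fintype_card, IsGalois.card_aut_eq_finrank, hdim]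
  have huniv : (Finset.univ : Finset (F2 ≃ₐ[F] F2)) = {1, σ} := by
    symm
    apply Finset.eq_of_subset_of_card_le (Finset.subset_univ _)
    rw [Finset.card_univ, hcardaut, Finset.card_insert_of_notMem (by simpa using hσne.symm),
      Finset.card_singleton]
  rw [Algebra.norm_eq_prod_automorphisms, huniv, Finset.prod_insert (by simpa using hσne.symm),
    Finset.prod_singleton, AlgEquiv.one_apply, hσ]

/-- If `q` is odd and `-1` is not a square in `𝔽_q`, then `𝔽_{q²} = 𝔽_q(√-1)`,
and if `ρ` is a primitive `2^d`-th root of unity for `d` maximal, then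
`N_{𝔽_{q²}/𝔽_q}(ρ) = -1`. -/

theorem stmt_0 (F F2 : Type) [Field F] [Fintype F] [Field F2] [Fintype F2]
    [Algebra F F2]
    (hq : Odd (Fintype.card F))
    (hns : ¬ IsSquare (-1 : F))
    (hdim : Module.finrank F F2 = 2) :
    (∃ i : F2, i ^ 2 = -1 ∧ IntermediateField.adjoin F ({i} : Set F2) = ⊤) ∧
      ∀ (d : ℕ) (ρ : F2ˣ), orderOf ρ = 2 ^ d →
        (∀ (e : ℕ) (ρ' : F2ˣ), orderOf ρ' = 2 ^ e → e ≤ d) →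
        Algebra.norm F (ρ : F2) = -1 := by
  classical
  haveI : FiniteDimensional F F2 := Module.Finite.of_finite
  set q := Fintype.card F with hqdef
  have hq2 : 2 ≤ q := Fintype.one_lt_card
  have hq4 : q % 4 = 3 := by
    by_contra h
    exact hns ((FiniteField.isSquare_neg_one_iff).mpr h)
  have hcard2 : Fintype.card F2 = q ^ 2 := by
    rw [card_eq_pow_finrank (K := F) (V := F2), hdim]
  have hmod : Fintype.card F2 % 4 = 1 := by
    rw [hcard2, Nat.pow_mod, hq4]
  have hsq : IsSquare (-1 : F2) := by
    rw [FiniteField.isSquare_neg_one_iff, hmod]; omega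
  obtain ⟨j, hj⟩ := hsq
  have hi : j ^ 2 = -1 := by rw [sq]; exact hj.symm
  constructor
  · refine ⟨j, hi, ?_⟩
    have hnotbot : j ∉ (⊥ : IntermediateField F F2) := by
      rw [IntermediateField.mem_bot]
      rintro ⟨a, ha⟩
      apply hns
      refine ⟨a, ?_⟩
      apply (algebraMap F F2).injective
      rw [map_mul, map_neg, map_one, ha, ← sq, hi]
    set K := IntermediateField.adjoin F ({j} : Set F2) with hK
    have hmul : finrank F K * finrank K F2 = 2 := by
      rw [Module.finrank_mul_finrank, hdim]
    have h1 : finrank F K ≠ 1 := by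
      intro h
      rw [hK, IntermediateField.finrank_adjoin_eq_one_iff] at h
      exact hnotbot (by simpa using h)
    have hpos : 0 < finrank F K := Module.finrank_pos
    have hdvd : finrank F K ∣ 2 := ⟨_, hmul.symm⟩
    have hle : finrank F K ≤ 2 := Nat.le_of_dvd (by norm_num) hdvd
    have h2 : finrank F K = 2 := by omega
    have h3 : finrank K F2 = 1 := by
      rw [h2] at hmul; omega
    have hbot : (⊥ : Subalgebra K F2) = ⊤ := Subalgebra.bot_eq_top_of_finrank_eq_one h3
    apply IntermediateField.toSubalgebra_injective
    rw [IntermediateField.top_toSubalgebra]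
    rw [eq_top_iff]
    rintro x -
    have hx : x ∈ (⊥ : Subalgebra K F2) := hbot ▸ trivial
    obtain ⟨y, hy⟩ := Algebra.mem_bot.mp hx
    rw [← hy]
    exact y.2
  · intro d ρ hρ hmax
    -- number theory on d
    have hn0 : Fintype.card F2ˣ = q ^ 2 - 1 := by rw [Fintype.card_units, hcard2]
    have hnne : q ^ 2 - 1 ≠ 0 := by
      have := Nat.pow_le_pow_left hq2 2
      omega
    have hdvd : 2 ^ d ∣ q ^ 2 - 1 := by rw [← hn0, ← hρ]; exact orderOf_dvd_card
    have hnd : ¬ 2 ^ (d + 1) ∣ q ^ 2 - 1 := by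
      intro h
      obtain ⟨u, hu⟩ := IsCyclic.exists_generator (α := F2ˣ)
      have hou : orderOf u = q ^ 2 - 1 := by
        rw [orderOf_eq_card_of_forall_mem_zpowers hu, Nat.card_eq_fintype_card, hn0]
      set k := (q ^ 2 - 1) / 2 ^ (d + 1) with hk
      have hkdvd : k ∣ q ^ 2 - 1 := Nat.div_dvd_of_dvd h
      have hord : orderOf (u ^ k) = 2 ^ (d + 1) := by
        rw [orderOf_pow, hou, Nat.gcd_eq_right hkdvd, hk, Nat.div_div_self h hnne]
      have := hmax (d + 1) (u ^ k) hord
      omega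
    have hvn : (q ^ 2 - 1).factorization 2 = d := by
      have h1 : d ≤ (q ^ 2 - 1).factorization 2 :=
        (Nat.Prime.pow_dvd_iff_le_factorization Nat.prime_two hnne).mp hdvd
      have h2 : ¬ (d + 1 ≤ (q ^ 2 - 1).factorization 2) := fun h =>
        hnd ((Nat.Prime.pow_dvd_iff_le_factorization Nat.prime_two hnne).mpr h)
      omega
    have hfact : q ^ 2 - 1 = (q - 1) * (q + 1) := by
      obtain ⟨r, hr⟩ : ∃ r, q = r + 2 := ⟨q - 2, by omega⟩
      have e1 : q - 1 = r + 1 := by omega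
      have e2 : q + 1 = r + 3 := by omega
      have e3 : q ^ 2 = (r + 2) * (r + 2) := by rw [hr]; ring
      have e4 : (r + 1) * (r + 3) + 1 = (r + 2) * (r + 2) := by ring
      rw [e1, e2, e3]
      omega
    have hv1 : (q - 1).factorization 2 = 1 := by
      have hne : q - 1 ≠ 0 := by omega
      have h1 : 2 ^ 1 ∣ q - 1 := by rw [pow_one]; omega
      have h2 : ¬ 2 ^ 2 ∣ q - 1 := by rw [sq]; omega
      have h3 := (Nat.Prime.pow_dvd_iff_le_factorization Nat.prime_two hne).mp h1
      have h4 : ¬ (2 ≤ (q - 1).factorization 2) := fun h =>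
        h2 ((Nat.Prime.pow_dvd_iff_le_factorization Nat.prime_two hne).mpr h)
      omega
    have hvsum : (q ^ 2 - 1).factorization 2 = 1 + (q + 1).factorization 2 := by
      rw [hfact, Nat.factorization_mul (by omega) (by omega), Finsupp.add_apply, hv1]
    set e := (q + 1).factorization 2 with he
    have hde : d = e + 1 := by omega
    set m := (q + 1) / 2 ^ e with hm
    have hqm : q + 1 = 2 ^ e * m := (Nat.ordProj_mul_ordCompl_eq_self (q + 1) 2).symm
    have hmodd : Odd m := by
      rw [Nat.odd_iff, Nat.two_dvd_ne_zero.symm] at *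
      exact Nat.not_dvd_ordCompl Nat.prime_two (by omega)
    -- the element ρ^(2^e) equals -1
    set t := (ρ : F2) ^ 2 ^ e with ht
    have ht2 : t * t = 1 := by
      rw [ht, ← pow_add, ← two_mul, ← pow_succ', ← hde]
      have : ((ρ ^ 2 ^ d : F2ˣ) : F2) = 1 := by rw [← hρ, pow_orderOf_eq_one]; rfl
      rw [← Units.val_pow_eq_pow_val]
      rw [← hρ, pow_orderOf_eq_one]; rfl
    have htne : t ≠ 1 := by
      intro h
      have hu1 : ρ ^ 2 ^ e = 1 := by
        ext; rw [Units.val_pow_eq_pow_val, ← ht, h]; rfl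
      have := orderOf_dvd_of_pow_eq_one hu1
      rw [hρ, hde] at this
      have := Nat.le_of_dvd (by positivity) this
      have : (2:ℕ) ^ e < 2 ^ (e + 1) := by
        exact Nat.pow_lt_pow_right (by norm_num) (by omega)
      omega
    have htval : t = -1 := by
      rcases mul_self_eq_one_iff.mp ht2 with h | h
      · exact absurd h htne
      · exact h
    -- finish
    apply (algebraMap F F2).injective
    rw [norm_formula F F2 hdim, map_neg, map_one, ← hqdef]
    calc (ρ : F2) * (ρ : F2) ^ q = (ρ : F2) ^ (q + 1) := by rw [pow_succ']
      _ = ((ρ : F2) ^ 2 ^ e) ^ m := by rw [hqm, pow_mul]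
      _ = (-1) ^ m := by rw [← ht, htval]
      _ = -1 := hmodd.neg_one_pow
end

section
/- Let E/F₀ be a Galois extension with dihedral Galois group of order 2m, and let F be the fixed field of the rotation subgroup. If L is an intermediate field of E/F₀ with F ⊄ L and L/F₀ Galois, then [L : F₀] ≤ 2. -/
open Subgroup DihedralGroup

/-- A normal subgroup of the dihedral group not contained in the rotation subgroup
has index at most 2. -/
lemma dihedral_index_le_two (m : ℕ) (hm : 2 ≤ m) (N : Subgroup (DihedralGroup m))
    (hN : N.Normal) (h : ¬ N ≤ Subgroup.zpowers (DihedralGroup.r 1)) : N.index ≤ 2 := by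
  haveI : NeZero m := ⟨by omega⟩
  obtain ⟨x, hxN, hxR⟩ := SetLike.not_le_iff_exists.mp h
  obtain (i | k) := x
  · refine absurd ⟨(i.val : ℤ), ?_⟩ hxR
    show DihedralGroup.r 1 ^ ((i.val : ℤ)) = DihedralGroup.r i
    rw [zpow_natCast, DihedralGroup.r_one_pow, ZMod.natCast_val, ZMod.cast_id]
  -- `sr k ∈ N`; conjugating by `r 1` and multiplying gives `r 2 ∈ N`.
  have hinv : (DihedralGroup.r (1 : ZMod m))⁻¹ = DihedralGroup.r (-1) := rfl
  have hc : DihedralGroup.r 1 * DihedralGroup.sr k * (DihedralGroup.r 1)⁻¹ ∈ N :=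
    hN.conj_mem _ hxN _
  have hc' : DihedralGroup.r 1 * DihedralGroup.sr k * (DihedralGroup.r 1)⁻¹
      = DihedralGroup.sr (k - 2) := by
    rw [hinv, DihedralGroup.r_mul_sr, DihedralGroup.sr_mul_r]
    ring_nf
  rw [hc'] at hc
  have h2 : (DihedralGroup.r 2 : DihedralGroup m) ∈ N := by
    have := N.mul_mem hc hxN
    rw [DihedralGroup.sr_mul_sr] at this
    convert this using 2
    ring
  set K : Subgroup (DihedralGroup m) := Subgroup.zpowers (DihedralGroup.r 2) with hK
  have hKN : K ≤ N := Subgroup.zpowers_le.mpr h2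
  have hsrK : DihedralGroup.sr k ∉ K := by
    intro hmem
    apply hxR
    have : K ≤ Subgroup.zpowers (DihedralGroup.r (1 : ZMod m)) := by
      apply Subgroup.zpowers_le.mpr
      refine ⟨((2 : ℕ) : ℤ), ?_⟩
      show DihedralGroup.r 1 ^ (((2:ℕ) : ℤ)) = DihedralGroup.r 2
      rw [zpow_natCast, DihedralGroup.r_one_pow]
      norm_num
    exact this hmem
  -- card K = m / gcd m 2
  have hcardK : Nat.card K = m / Nat.gcd m 2 := by
    rw [hK, Nat.card_zpowers, DihedralGroup.orderOf_r]
    congr 1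
    have h2v : ((2 : ZMod m)).val = 2 % m := by
      have : ((2 : ZMod m)) = ((2 : ℕ) : ZMod m) := by push_cast; ring
      rw [this, ZMod.val_natCast]
    rw [h2v, Nat.gcd_comm m (2 % m), ← Nat.gcd_rec m 2, Nat.gcd_comm]
  -- K is a proper subgroup of N
  have hprop : K.subgroupOf N ≠ ⊤ := by
    intro htop
    rw [Subgroup.subgroupOf_eq_top] at htop
    exact hsrK (htop hxN)
  have hidx1 : (K.subgroupOf N).index ≠ 1 := fun h1 => hprop (Subgroup.index_eq_one.mp h1)
  have hidx0 : (K.subgroupOf N).index ≠ 0 := Subgroup.index_ne_zero_of_finite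
  have hidx2 : 2 ≤ (K.subgroupOf N).index := by omega
  have hcard_sub : Nat.card (K.subgroupOf N) = Nat.card K :=
    Nat.card_congr (Subgroup.subgroupOfEquivOfLe hKN).toEquiv
  have hNcardeq : (K.subgroupOf N).index * Nat.card (K.subgroupOf N) = Nat.card N :=
    Subgroup.index_mul_card _
  have hNcard : m ≤ Nat.card N := by
    rw [← hNcardeq, hcard_sub, hcardK]
    have hg2 : Nat.gcd m 2 ≤ 2 := Nat.le_of_dvd (by norm_num) (Nat.gcd_dvd_right m 2)
    have hgm : Nat.gcd m 2 ∣ m := Nat.gcd_dvd_left m 2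
    have hgm' : m / Nat.gcd m 2 * Nat.gcd m 2 = m := Nat.div_mul_cancel hgm
    calc m = m / Nat.gcd m 2 * Nat.gcd m 2 := hgm'.symm
      _ ≤ m / Nat.gcd m 2 * 2 := Nat.mul_le_mul_left _ hg2
      _ = 2 * (m / Nat.gcd m 2) := by ring
      _ ≤ (K.subgroupOf N).index * (m / Nat.gcd m 2) := Nat.mul_le_mul_right _ hidx2
  have htotal : N.index * Nat.card N = 2 * m := by
    rw [Subgroup.index_mul_card, DihedralGroup.nat_card]
  have : N.index * m ≤ 2 * m := by
    calc N.index * m ≤ N.index * Nat.card N := Nat.mul_le_mul_left _ hNcard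
      _ = 2 * m := htotal
  exact Nat.le_of_mul_le_mul_right this (by omega)

/-- If `E/F₀` is Galois with dihedral Galois group of order `2m`, `F` is the fixed field of
the rotation subgroup, and `L` is an intermediate field of `E/F₀` not containing `F` such
that `L/F₀` is Galois, then `[L : F₀] ≤ 2`. -/
theorem stmt_5 (F₀ E : Type) [Field F₀] [Field E] [Algebra F₀ E]
    [FiniteDimensional F₀ E] [IsGalois F₀ E] (m : ℕ) (hm : 2 ≤ m)
    (e : (E ≃ₐ[F₀] E) ≃* DihedralGroup m)
    (F : IntermediateField F₀ E)
    (hF : F = IntermediateField.fixedField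
      (Subgroup.comap e.toMonoidHom (Subgroup.zpowers (DihedralGroup.r 1))))
    (L : IntermediateField F₀ E) (hFL : ¬ F ≤ L)
    (hLgal : IsGalois F₀ L) :
    Module.finrank F₀ L ≤ 2 := by
  classical
  set N : Subgroup (E ≃ₐ[F₀] E) := L.fixingSubgroup with hNdef
  haveI hNnormal : N.Normal := IsGalois.fixingSubgroup_normal_of_isGalois L
  -- image of N in the dihedral group
  set N' : Subgroup (DihedralGroup m) := N.map e.toMonoidHom with hN'def
  haveI hN'normal : N'.Normal := hNnormal.map e.toMonoidHom e.surjective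
  have hN'notle : ¬ N' ≤ Subgroup.zpowers (DihedralGroup.r 1) := by
    intro hle
    apply hFL
    rw [hF]
    intro x hx
    have hNle : N ≤ Subgroup.comap e.toMonoidHom (Subgroup.zpowers (DihedralGroup.r 1)) :=
      Subgroup.map_le_iff_le_comap.mp hle
    have hxL : x ∈ IntermediateField.fixedField N := fun g => hx ⟨g.1, hNle g.2⟩
    rwa [hNdef, IsGalois.fixedField_fixingSubgroup L] at hxL
  have hidx : N'.index ≤ 2 := dihedral_index_le_two m hm N' hN'normal hN'notle
  have hidx_eq : N.index = N'.index :=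
    (Subgroup.index_map_eq N e.surjective (by rw [(MonoidHom.ker_eq_bot_iff _).mpr e.injective]; exact bot_le)).symm
  -- relate finrank to index
  have h1 : Nat.card N = Module.finrank L E := by
    rw [← IsGalois.card_fixingSubgroup_eq_finrank L, Nat.card_eq_fintype_card]
  have h2 : N.index * Nat.card N = Nat.card (E ≃ₐ[F₀] E) := Subgroup.index_mul_card N
  have h3 : Nat.card (E ≃ₐ[F₀] E) = Module.finrank F₀ E := by
    rw [IsGalois.card_aut_eq_finrank]
  have h4 : Module.finrank F₀ L * Module.finrank L E = Module.finrank F₀ E :=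
    Module.finrank_mul_finrank F₀ L E
  have h5 : 0 < Module.finrank L E := Module.finrank_pos
  have h6 : Module.finrank F₀ L * Module.finrank L E = N.index * Module.finrank L E := by
    rw [h4, ← h3, ← h2, h1]
  have h7 : Module.finrank F₀ L = N.index := Nat.eq_of_mul_eq_mul_right h5 h6
  rw [h7, hidx_eq]
  exact hidx
end

section
/- Let E/F₀ be a Galois extension with dihedral Galois group of order 2m and F the fixed field of the rotation subgroup. Then there exist exactly m intermediate fields E' of E/F₀ with [E' : F₀] = m and E'F = E. -/
open Subgroup DihedralGroup

lemma zpow_of_orderTwo {G : Type*} [Group G] (g : G) (hg : g * g = 1) (k : ℤ) :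
    g ^ k = 1 ∨ g ^ k = g := by
  have h2 : g ^ (2:ℤ) = 1 := by rw [show (2:ℤ) = 1+1 by ring, zpow_add, zpow_one, hg]
  rcases Int.even_or_odd k with ⟨t, ht⟩ | ⟨t, ht⟩
  · left; rw [ht, show t + t = 2*t by ring, zpow_mul, h2, one_zpow]
  · right; rw [ht, zpow_add, zpow_mul, h2, one_zpow, one_mul, zpow_one]

lemma mem_zpowers_orderTwo {G : Type*} [Group G] {g x : G} (hg : g * g = 1)
    (hx : x ∈ zpowers g) : x = 1 ∨ x = g := by
  obtain ⟨k, hk⟩ := hx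
  rcases zpow_of_orderTwo g hg k with h | h <;> simp_all

lemma r_one_zpow' {n : ℕ} (k : ℤ) : (DihedralGroup.r 1 : DihedralGroup n) ^ k = DihedralGroup.r (k : ZMod n) := by
  rcases Int.eq_nat_or_neg k with ⟨j, rfl | rfl⟩
  · rw [zpow_natCast, r_one_pow]; push_cast; rfl
  · rw [zpow_neg, zpow_natCast, r_one_pow]
    have : (DihedralGroup.r (j : ZMod n))⁻¹ = DihedralGroup.r (-(j : ZMod n)) :=
      inv_eq_of_mul_eq_one_right (by rw [DihedralGroup.r_mul_r]; simp)
    rw [this]; push_cast; ring_nf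

lemma count_dihedral (m : ℕ) (hm : 2 ≤ m) :
    Nat.card {H : Subgroup (DihedralGroup m) //
      Nat.card H = 2 ∧ H ⊓ zpowers (DihedralGroup.r 1) = ⊥} = m := by
  have : NeZero m := ⟨by omega⟩
  have key : ∀ i : ZMod m, Nat.card (zpowers (sr i : DihedralGroup m)) = 2 ∧
      zpowers (sr i : DihedralGroup m) ⊓ zpowers (DihedralGroup.r 1) = ⊥ := by
    intro i
    constructor
    · rw [Nat.card_zpowers, orderOf_sr]
    · rw [eq_bot_iff]
      rintro x ⟨hx1, hx2⟩
      rcases mem_zpowers_orderTwo (sr_mul_self i) hx1 with h | h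
      · simpa using h
      · exfalso
        obtain ⟨k, hk⟩ := hx2
        rw [h] at hk
        have : (DihedralGroup.r 1 : DihedralGroup m) ^ k = DihedralGroup.r (k : ZMod m) :=
          r_one_zpow' k
        have hk' : (DihedralGroup.r 1 : DihedralGroup m) ^ k = sr i := hk
        rw [this] at hk'
        cases hk' 
  let f : ZMod m → {H : Subgroup (DihedralGroup m) //
      Nat.card H = 2 ∧ H ⊓ zpowers (DihedralGroup.r 1) = ⊥} :=
    fun i => ⟨zpowers (sr i), key i⟩
  have hbij : Function.Bijective f := by
    constructor
    · intro i j hij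
      have : (sr i : DihedralGroup m) ∈ zpowers (sr j) := by
        rw [show zpowers (sr j : DihedralGroup m) = zpowers (sr i) from
          congrArg Subtype.val hij.symm]
        exact mem_zpowers _
      rcases mem_zpowers_orderTwo (sr_mul_self j) this with h | h
      · cases h
      · exact (DihedralGroup.sr.injEq _ _).mp h
    · rintro ⟨H, hcard, hinf⟩
      have hne : H ≠ ⊥ := by
        intro h; rw [h, card_bot] at hcard; omega
      obtain ⟨⟨g, hgH⟩, hg1⟩ := Subgroup.ne_bot_iff_exists_ne_one.mp hne
      have hg1' : g ≠ 1 := by simpa [Subtype.ext_iff] using hg1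
      obtain i | i := g
      · exfalso
        have : DihedralGroup.r i ∈ H ⊓ zpowers (DihedralGroup.r 1) := by
          refine ⟨hgH, ?_⟩
          refine ⟨(i.val : ℤ), ?_⟩
          have : (DihedralGroup.r 1 : DihedralGroup m) ^ (i.val : ℤ) =
              DihedralGroup.r ((i.val : ℤ) : ZMod m) := r_one_zpow' _
          refine this.trans ?_
          push_cast
          simp
        rw [hinf] at this
        exact hg1' this
      · refine ⟨i, ?_⟩
        have hle : zpowers (sr i : DihedralGroup m) ≤ H := by
          rw [zpowers_le]; exact hgH
        have := Subgroup.eq_of_le_of_card_ge hle (by rw [hcard, (key i).1])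
        exact Subtype.ext this
  rw [Nat.card_congr (Equiv.ofBijective f hbij).symm, Nat.card_zmod]


/-- If `E/F₀` is Galois with dihedral Galois group of order `2m` and `F` is the fixed field
of the rotation subgroup, then there are exactly `m` intermediate fields `E'` of `E/F₀` with
`[E' : F₀] = m` and `E'F = E`. -/
theorem stmt_6 (F₀ E : Type) [Field F₀] [Field E] [Algebra F₀ E]
    [FiniteDimensional F₀ E] [IsGalois F₀ E] (m : ℕ) (hm : 2 ≤ m)
    (e : (E ≃ₐ[F₀] E) ≃* DihedralGroup m)
    (F : IntermediateField F₀ E)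
    (hF : F = IntermediateField.fixedField
      (Subgroup.comap e.toMonoidHom (Subgroup.zpowers (DihedralGroup.r 1)))) :
    Nat.card {E' : IntermediateField F₀ E //
      Module.finrank F₀ E' = m ∧ E' ⊔ F = ⊤} = m := by
  classical
  have : NeZero m := ⟨by omega⟩
  set G := E ≃ₐ[F₀] E
  set R : Subgroup G := Subgroup.comap e.toMonoidHom (Subgroup.zpowers (DihedralGroup.r 1)) with hR
  -- total degree
  have hcardG : Nat.card G = 2 * m := by
    rw [Nat.card_congr e.toEquiv, DihedralGroup.nat_card]
  have htot : Module.finrank F₀ E = 2 * m := by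
    rw [← IsGalois.card_aut_eq_finrank] at *
    exact hcardG
  -- Galois correspondence
  let γ : IntermediateField F₀ E ≃o (Subgroup G)ᵒᵈ := IsGalois.intermediateFieldEquivSubgroup
  have hγ : ∀ E' : IntermediateField F₀ E, γ E' = E'.fixingSubgroup := fun _ => rfl
  -- degree correspondence
  have hdeg : ∀ E' : IntermediateField F₀ E,
      Module.finrank F₀ E' = m ↔ Nat.card (E'.fixingSubgroup) = 2 := by
    intro E'
    have h1 : Nat.card (E'.fixingSubgroup) = Module.finrank E' E := by
      exact IsGalois.card_fixingSubgroup_eq_finrank E'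
    have h2 : Module.finrank F₀ E' * Module.finrank E' E = 2 * m := by
      rw [Module.finrank_mul_finrank]; exact htot
    have hpos : 0 < Module.finrank E' E := Module.finrank_pos
    have hpos' : 0 < Module.finrank F₀ E' := Module.finrank_pos
    constructor
    · intro h
      rw [h1]
      rw [h] at h2
      exact Nat.eq_of_mul_eq_mul_left (by omega : 0 < m) (by omega)
    · intro h
      rw [h1] at h
      rw [h] at h2
      omega
  -- sup correspondence
  have hfixF : F.fixingSubgroup = R := by
    rw [hF, hR]; exact IntermediateField.fixingSubgroup_fixedField _
  have hsup : ∀ E' : IntermediateField F₀ E,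
      E' ⊔ F = ⊤ ↔ E'.fixingSubgroup ⊓ R = ⊥ := by
    intro E'
    rw [← hfixF, ← hγ, ← hγ]
    constructor
    · intro h
      have h2 := congrArg γ h
      rw [γ.map_sup, γ.map_top] at h2
      exact h2
    · intro h
      apply γ.injective
      rw [γ.map_sup, γ.map_top]
      exact h
  -- transfer to subgroups of G
  have step1 : Nat.card {E' : IntermediateField F₀ E //
      Module.finrank F₀ E' = m ∧ E' ⊔ F = ⊤} =
      Nat.card {H : Subgroup G // Nat.card H = 2 ∧ H ⊓ R = ⊥} := by
    apply Nat.card_congr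
    exact Equiv.subtypeEquiv γ.toEquiv (fun E' => by
      rw [hdeg E', hsup E']; exact Iff.rfl)
  -- transfer along e
  have step2 : Nat.card {H : Subgroup G // Nat.card H = 2 ∧ H ⊓ R = ⊥} =
      Nat.card {H : Subgroup (DihedralGroup m) //
        Nat.card H = 2 ∧ H ⊓ Subgroup.zpowers (DihedralGroup.r 1) = ⊥} := by
    have hei : Function.Injective e.toMonoidHom := e.injective
    have hes : Function.Surjective e.toMonoidHom := e.surjective
    apply Nat.card_congr
    refine Equiv.subtypeEquiv ⟨fun H => H.map e.toMonoidHom,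
      fun H => H.comap e.toMonoidHom,
      fun H => Subgroup.comap_map_eq_self_of_injective hei H,
      fun H => Subgroup.map_comap_eq_self_of_surjective hes H⟩ (fun H => ?_)
    simp only [Equiv.coe_fn_mk]
    constructor
    · rintro ⟨h1, h2⟩
      refine ⟨?_, ?_⟩
      · rw [← h1]
        exact (Nat.card_congr (Subgroup.equivMapOfInjective H e.toMonoidHom hei).toEquiv).symm
      · rw [← Subgroup.map_comap_eq_self_of_surjective hes
          (Subgroup.zpowers (DihedralGroup.r 1)), ← Subgroup.map_inf _ _ _ hei,
          ← hR, h2, Subgroup.map_bot]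
    · rintro ⟨h1, h2⟩
      refine ⟨?_, ?_⟩
      · rw [← h1]
        exact Nat.card_congr (Subgroup.equivMapOfInjective H e.toMonoidHom hei).toEquiv
      · have : (H ⊓ R).map e.toMonoidHom = ⊥ := by
          rw [Subgroup.map_inf _ _ _ hei, hR,
            Subgroup.map_comap_eq_self_of_surjective hes, h2]
        have hinj := Subgroup.map_injective (f := e.toMonoidHom) hei
        apply hinj
        rw [this, Subgroup.map_bot]
  rw [step1, step2]
  exact count_dihedral m hm
end

section
/- Let F₀ be a field, F/F₀ a quadratic Galois extension, and m ≥ 2 coprime to char(F₀). Suppose F contains a primitive m-th root of unity ρ, a ∈ F₀^*, and [F(a^{1/m}) : F] = m. Then F(a^{1/m})/F₀ is Galois with dihedral Galois group of order 2m if and only if N_{F/F₀}(ρ) = 1. -/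
open Polynomial IntermediateField

set_option linter.unusedSectionVars false
set_option linter.unnecessarySimpa false
set_option maxHeartbeats 1000000

section AuxGroup

lemma aux_dihedral {G : Type} [Group G] [Fintype G] {m : ℕ} [NeZero m]
    (hcard : Fintype.card G = 2 * m)
    (τ σ : G) (hτ : orderOf τ = m) (hσ2 : σ * σ = 1) (hrel : σ * τ * σ⁻¹ = τ⁻¹)
    (hout : ∀ k : ℕ, σ ≠ τ ^ k) :
    Nonempty (G ≃* DihedralGroup m) := by
  set t : ZMod m → G := fun i => τ ^ i.val with ht
  have ht_add : ∀ i j : ZMod m, t (i + j) = t i * t j := by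
    intro i j
    have h := pow_mod_orderOf τ (i.val + j.val)
    rw [hτ] at h
    show τ ^ (i + j).val = τ ^ i.val * τ ^ j.val
    rw [ZMod.val_add, h, pow_add]
  have ht_zero : t 0 = 1 := by simp [ht]
  have ht_inv : ∀ i : ZMod m, t (-i) = (t i)⁻¹ := by
    intro i
    have : t (-i) * t i = 1 := by rw [← ht_add, neg_add_cancel, ht_zero]
    exact eq_inv_of_mul_eq_one_left this
  have hconj : ∀ i : ZMod m, σ * t i * σ⁻¹ = (t i)⁻¹ := by
    intro i
    show σ * τ ^ i.val * σ⁻¹ = (τ ^ i.val)⁻¹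
    rw [← conj_pow, hrel, inv_pow]
  have hστ : ∀ i : ZMod m, σ * t i = t (-i) * σ := by
    intro i
    rw [ht_inv, ← hconj i, inv_mul_cancel_right]
  have h1 : ∀ i : ZMod m, t i * σ = σ * t (-i) := by
    intro i
    rw [hστ (-i), neg_neg]
  let ψ : DihedralGroup m →* G := MonoidHom.mk'
    (fun x => match x with
      | .r i => t i
      | .sr i => σ * t i)
    (by
      intro x y
      rcases x with i | i <;> rcases y with j | j
      · show t (i + j) = t i * t j
        exact ht_add i j
      · show σ * t (j - i) = t i * (σ * t j)
        rw [← mul_assoc, h1, mul_assoc, ← ht_add, sub_eq_neg_add]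
      · show σ * t (i + j) = σ * t i * t j
        rw [mul_assoc, ht_add]
      · show t (j - i) = σ * t i * (σ * t j)
        calc t (j - i) = t (-i + j) := by rw [sub_eq_neg_add]
          _ = (σ * σ) * (t (-i) * t j) := by rw [hσ2, one_mul, ht_add]
          _ = σ * (σ * t (-i)) * t j := by simp only [mul_assoc]
          _ = σ * (t i * σ) * t j := by rw [h1]
          _ = σ * t i * (σ * t j) := by simp only [mul_assoc])
  have hinj : Function.Injective ψ := by
    rw [injective_iff_map_eq_one]
    intro x hx
    rcases x with i | i
    · have hx' : τ ^ i.val = 1 := hx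
      have hlt := ZMod.val_lt i
      have hdvd : m ∣ i.val := by
        have := orderOf_dvd_of_pow_eq_one hx'
        rwa [hτ] at this
      have hzero : i.val = 0 := Nat.eq_zero_of_dvd_of_lt hdvd hlt
      have : i = 0 := (ZMod.val_eq_zero i).mp hzero
      rw [this, DihedralGroup.one_def]
    · exfalso
      have h2 : σ * t i = 1 := hx
      have h3 : σ = (t i)⁻¹ := eq_inv_of_mul_eq_one_left h2
      rw [← ht_inv] at h3
      exact hout ((-i).val) h3
  have hbij : Function.Bijective ψ := by
    rw [Fintype.bijective_iff_injective_and_card]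
    exact ⟨hinj, by rw [DihedralGroup.card, hcard]⟩
  exact ⟨(MulEquiv.ofBijective ψ hbij).symm⟩

lemma aux_from_dihedral {G : Type} [Group G] {m : ℕ} (hm3 : 3 ≤ m)
    (h : G ≃* DihedralGroup m) (τ : G) (hτ : orderOf τ = m) :
    ∃ σ : G, (∀ k : ℕ, σ ≠ τ ^ k) ∧ σ * τ * σ⁻¹ = τ⁻¹ := by
  have hordh : orderOf (h τ) = m :=
    (orderOf_injective h.toMonoidHom h.injective τ).trans hτ
  have hrpow : ∀ (u : ZMod m) (k : ℕ),
      ∃ s : ZMod m, (DihedralGroup.r u) ^ k = DihedralGroup.r s := by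
    intro u k
    induction k with
    | zero => exact ⟨0, by rw [pow_zero, DihedralGroup.one_def]⟩
    | succ n ih =>
      obtain ⟨s, hs⟩ := ih
      exact ⟨s + u, by rw [pow_succ, hs, DihedralGroup.r_mul_r]⟩
  obtain ⟨u, hu⟩ : ∃ u : ZMod m, h τ = DihedralGroup.r u := by
    rcases e : h τ with u | u
    · exact ⟨u, rfl⟩
    · exfalso
      rw [e, DihedralGroup.orderOf_sr] at hordh
      omega
  refine ⟨h.symm (DihedralGroup.sr 0), ?_, ?_⟩
  · intro k hk
    apply_fun h at hk
    rw [MulEquiv.apply_symm_apply, map_pow, hu] at hk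
    obtain ⟨s, hs⟩ := hrpow u k
    rw [hs] at hk
    simpa using hk
  · have hsrinv : (DihedralGroup.sr (0 : ZMod m))⁻¹ = DihedralGroup.sr 0 :=
      inv_eq_of_mul_eq_one_right (DihedralGroup.sr_mul_self 0)
    apply h.injective
    rw [map_mul, map_mul, map_inv, MulEquiv.apply_symm_apply, hu, map_inv, hu, hsrinv,
      DihedralGroup.sr_mul_r, DihedralGroup.sr_mul_sr]
    have : (DihedralGroup.r u)⁻¹ = DihedralGroup.r (-u) :=
      inv_eq_of_mul_eq_one_right (by
        rw [DihedralGroup.r_mul_r, add_neg_cancel, DihedralGroup.one_def])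
    rw [this]
    norm_num

end AuxGroup

section Aux

variable {F₀ F E : Type} [Field F₀] [Field F] [Field E]
    [Algebra F₀ F] [Algebra F E] [Algebra F₀ E] [IsScalarTower F₀ F E]

lemma aux_top_le {α : E} (hint : IsIntegral F α)
    (hgen : IntermediateField.adjoin F ({α} : Set E) = ⊤)
    (A : Subalgebra F₀ E) (hF : ∀ x : F, algebraMap F E x ∈ A) (hαA : α ∈ A) :
    ∀ z : E, z ∈ A := by
  have hAA : Algebra.adjoin F ({α} : Set E) = ⊤ := by
    rw [← IntermediateField.adjoin_simple_toSubalgebra_of_isAlgebraic hint.isAlgebraic, hgen,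
      IntermediateField.top_toSubalgebra]
  intro z
  have hz : z ∈ Algebra.adjoin F ({α} : Set E) := hAA ▸ Algebra.mem_top
  refine Algebra.adjoin_induction (p := fun x _ => x ∈ A) ?_ ?_ ?_ ?_ hz
  · rintro x rfl; exact hαA
  · intro r; exact hF r
  · intro x y _ _ hx hy; exact add_mem hx hy
  · intro x y _ _ hx hy; exact mul_mem hx hy

lemma aux_ext {α : E} (hint : IsIntegral F α)
    (hgen : IntermediateField.adjoin F ({α} : Set E) = ⊤)
    (g h : E ≃ₐ[F₀] E)
    (hfix : ∀ x : F, g (algebraMap F E x) = h (algebraMap F E x))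
    (hroot : g α = h α) : g = h := by
  have := aux_top_le hint hgen (AlgHom.equalizer g.toAlgHom h.toAlgHom) hfix hroot
  exact AlgEquiv.ext fun z => this z

variable {m : ℕ} {ρ : F} {a : F₀} {α : E}

lemma aux_pow_fix (τ : E ≃ₐ[F₀] E)
    (hτfix : ∀ x : F, τ (algebraMap F E x) = algebraMap F E x) (k : ℕ) :
    ∀ x : F, (τ ^ k) (algebraMap F E x) = algebraMap F E x := by
  induction k with
  | zero => intro x; rfl
  | succ n ih =>
    intro x
    rw [pow_succ, AlgEquiv.mul_apply, hτfix, ih]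

lemma aux_pow (τ : E ≃ₐ[F₀] E) (hτα : τ α = algebraMap F E ρ * α)
    (hτfix : ∀ x : F, τ (algebraMap F E x) = algebraMap F E x) (k : ℕ) :
    (τ ^ k) α = algebraMap F E ρ ^ k * α := by
  induction k with
  | zero => simp
  | succ n ih =>
    rw [pow_succ, AlgEquiv.mul_apply, hτα, map_mul, aux_pow_fix τ hτfix n, ih]
    ring

lemma aux_alpha_ne (hm : 2 ≤ m) (ha : a ≠ 0)
    (hα : α ^ m = algebraMap F E (algebraMap F₀ F a)) : α ≠ 0 := by
  intro h
  apply ha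
  have h2 : (0:E) = algebraMap F E (algebraMap F₀ F a) := by
    rw [← hα, h, zero_pow (by omega : m ≠ 0)]
  have h3 := h2.symm
  rw [← IsScalarTower.algebraMap_apply] at h3
  exact (map_eq_zero_iff _ (algebraMap F₀ E).injective).mp h3

lemma aux_orderOf (hm : 2 ≤ m) (hρ : IsPrimitiveRoot ρ m) (ha : a ≠ 0)
    (hα : α ^ m = algebraMap F E (algebraMap F₀ F a))
    (hgen : IntermediateField.adjoin F ({α} : Set E) = ⊤)
    (hint : IsIntegral F α)
    (τ : E ≃ₐ[F₀] E) (hτα : τ α = algebraMap F E ρ * α)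
    (hτfix : ∀ x : F, τ (algebraMap F E x) = algebraMap F E x) :
    orderOf τ = m := by
  have hρ' : IsPrimitiveRoot (algebraMap F E ρ) m :=
    hρ.map_of_injective (algebraMap F E).injective
  have hα0 : α ≠ 0 := aux_alpha_ne hm ha hα
  have hτm : τ ^ m = 1 := by
    apply aux_ext hint hgen
    · exact aux_pow_fix τ hτfix m
    · rw [aux_pow τ hτα hτfix m, hρ'.pow_eq_one, one_mul, AlgEquiv.one_apply]
  have h1 : orderOf τ ∣ m := orderOf_dvd_of_pow_eq_one hτm
  have h2 : m ∣ orderOf τ := by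
    apply hρ'.dvd_of_pow_eq_one
    have h4 := aux_pow τ hτα hτfix (orderOf τ)
    rw [pow_orderOf_eq_one, AlgEquiv.one_apply] at h4
    have h3 : algebraMap F E ρ ^ orderOf τ * α = 1 * α := by rw [one_mul, ← h4]
    exact mul_right_cancel₀ hα0 h3
  exact Nat.dvd_antisymm h1 h2

lemma aux_root_form (hm : 2 ≤ m) (hρ : IsPrimitiveRoot ρ m) (ha : a ≠ 0)
    (hα : α ^ m = algebraMap F E (algebraMap F₀ F a))
    (g : E ≃ₐ[F₀] E) :
    ∃ k < m, g α = algebraMap F E ρ ^ k * α := by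
  haveI : NeZero m := ⟨by omega⟩
  have hρ' : IsPrimitiveRoot (algebraMap F E ρ) m :=
    hρ.map_of_injective (algebraMap F E).injective
  have hα0 : α ≠ 0 := aux_alpha_ne hm ha hα
  have hαm : α ^ m = algebraMap F₀ E a := by
    rw [hα, ← IsScalarTower.algebraMap_apply]
  have hg : (g α) ^ m = α ^ m := by
    rw [← map_pow, hαm, AlgEquiv.commutes]
  have hξ : (g α * α⁻¹) ^ m = 1 := by
    rw [mul_pow, hg, inv_pow, mul_inv_cancel₀ (pow_ne_zero m hα0)]
  obtain ⟨k, hk, hke⟩ := hρ'.eq_pow_of_pow_eq_one hξ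
  refine ⟨k, hk, ?_⟩
  rw [eq_comm, mul_inv_eq_iff_eq_mul₀ hα0] at hke
  exact hke

variable [FiniteDimensional F E]

lemma aux_minpoly (hm : 2 ≤ m)
    (hα : α ^ m = algebraMap F E (algebraMap F₀ F a))
    (hgen : IntermediateField.adjoin F ({α} : Set E) = ⊤)
    (hdeg : Module.finrank F E = m) :
    minpoly F α = X ^ m - C (algebraMap F₀ F a) := by
  have hint : IsIntegral F α := IsIntegral.of_finite F α
  have hdvd : minpoly F α ∣ X ^ m - C (algebraMap F₀ F a) := by
    apply minpoly.dvd
    rw [map_sub, map_pow, aeval_X, aeval_C, hα, sub_self]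
  have hmono := minpoly.monic hint
  have hq : (X ^ m - C (algebraMap F₀ F a)).Monic :=
    monic_X_pow_sub_C _ (by omega)
  have hdegq : (X ^ m - C (algebraMap F₀ F a)).natDegree = m := by
    rw [natDegree_X_pow_sub_C]
  have hdegmin : (minpoly F α).natDegree = m := by
    rw [← IntermediateField.adjoin.finrank hint]
    rw [hgen, IntermediateField.finrank_top', hdeg]
  exact eq_of_dvd_of_natDegree_le_of_leadingCoeff hdvd
    (by rw [hdegq, hdegmin]) (by rw [hmono.leadingCoeff, hq.leadingCoeff])

lemma aux_tau (hm : 2 ≤ m) (hρ : IsPrimitiveRoot ρ m)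
    (hα : α ^ m = algebraMap F E (algebraMap F₀ F a))
    (hgen : IntermediateField.adjoin F ({α} : Set E) = ⊤)
    (hdeg : Module.finrank F E = m) :
    ∃ τ : E ≃ₐ[F₀] E, τ α = algebraMap F E ρ * α ∧
      ∀ x : F, τ (algebraMap F E x) = algebraMap F E x := by
  have hint : IsIntegral F α := IsIntegral.of_finite F α
  have hmin := aux_minpoly hm hα hgen hdeg
  have htop : F⟮α⟯ = ⊤ := hgen
  let pb : PowerBasis F E :=
    (IntermediateField.adjoin.powerBasis hint).map
      ((IntermediateField.equivOfEq htop).trans IntermediateField.topEquiv)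
  have hpbgen : pb.gen = α := by
    rfl
  have hroot : (Polynomial.aeval (algebraMap F E ρ * α)) (minpoly F pb.gen) = 0 := by
    rw [hpbgen, hmin]
    have : (algebraMap F E ρ * α) ^ m = algebraMap F E (algebraMap F₀ F a) := by
      rw [mul_pow, ← map_pow, hρ.pow_eq_one, map_one, one_mul, hα]
    rw [map_sub, map_pow, aeval_X, aeval_C, this, sub_self]
  let φ : E →ₐ[F] E := pb.lift (algebraMap F E ρ * α) hroot
  haveI : Algebra.IsAlgebraic F E := Algebra.IsAlgebraic.of_finite F E
  let τF : E ≃ₐ[F] E := AlgEquiv.ofBijective φ (Algebra.IsAlgebraic.algHom_bijective φ)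
  refine ⟨τF.restrictScalars F₀, ?_, ?_⟩
  · show φ α = _
    rw [← hpbgen]; exact pb.lift_gen _ hroot
  · intro x
    show φ (algebraMap F E x) = _
    exact φ.commutes x

end Aux

section Aux3

variable {F₀ F E : Type} [Field F₀] [Field F] [Field E]
    [Algebra F₀ F] [Algebra F E] [Algebra F₀ E] [IsScalarTower F₀ F E]
    [FiniteDimensional F₀ E] [IsGalois F₀ F]

lemma aux_norm_prod [FiniteDimensional F₀ F] (hF : Module.finrank F₀ F = 2)
    (g : F ≃ₐ[F₀] F) (hg : g ≠ 1) (x : F) :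
    algebraMap F₀ F (Algebra.norm F₀ x) = x * g x := by
  classical
  rw [Algebra.norm_eq_prod_automorphisms]
  have hcard : Fintype.card (F ≃ₐ[F₀] F) = 2 := by
    rw [← Nat.card_eq_fintype_card, IsGalois.card_aut_eq_finrank, hF]
  have huniv : (Finset.univ : Finset (F ≃ₐ[F₀] F)) = {1, g} := by
    symm
    apply Finset.eq_of_subset_of_card_le (Finset.subset_univ _)
    rw [Finset.card_univ, hcard, Finset.card_pair (Ne.symm hg)]
  rw [huniv, Finset.prod_pair (Ne.symm hg), AlgEquiv.one_apply]

lemma aux_isGalois {m : ℕ} (hm : 2 ≤ m) (hchar : (m : F₀) ≠ 0)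
    {ρ : F} (hρ : IsPrimitiveRoot ρ m) {a : F₀} (ha : a ≠ 0) {α : E}
    (hα : α ^ m = algebraMap F E (algebraMap F₀ F a))
    (hgen : IntermediateField.adjoin F ({α} : Set E) = ⊤)
    (hdeg : Module.finrank F E = m) :
    IsGalois F₀ E := by
  haveI : FiniteDimensional F₀ F := FiniteDimensional.left F₀ F E
  haveI : FiniteDimensional F E := FiniteDimensional.right F₀ F E
  have hint : IsIntegral F α := IsIntegral.of_finite F α
  have hρ' : IsPrimitiveRoot (algebraMap F E ρ) m :=
    hρ.map_of_injective (algebraMap F E).injective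
  have hα' : α ^ m = algebraMap F₀ E a := by
    rw [hα, ← IsScalarTower.algebraMap_apply]
  obtain ⟨θ, hθ⟩ := Field.exists_primitive_element F₀ F
  have hintθ : IsIntegral F₀ θ := IsIntegral.of_finite F₀ θ
  set q : F₀[X] := X ^ m - C a with hq
  set p : F₀[X] := q * minpoly F₀ θ with hp
  have hqmonic : q.Monic := monic_X_pow_sub_C _ (by omega)
  have hpne : p ≠ 0 := (hqmonic.mul (minpoly.monic hintθ)).ne_zero
  have hsplits : (p.map (algebraMap F₀ E)).Splits := by
    rw [Polynomial.map_mul]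
    apply Polynomial.Splits.mul
    · have : q.map (algebraMap F₀ E) = X ^ m - C (algebraMap F₀ E a) := by
        simp [hq]
      rw [this]
      exact X_pow_sub_C_splits_of_isPrimitiveRoot hρ' hα'
    · rw [IsScalarTower.algebraMap_eq F₀ F E]
      rw [← Polynomial.map_map]
      exact (Normal.splits inferInstance θ).map _
  have hαroot : α ∈ p.rootSet E := by
    rw [Polynomial.mem_rootSet]
    refine ⟨hpne, ?_⟩
    rw [hp, map_mul, hq, map_sub, map_pow, aeval_X, aeval_C, hα', sub_self, zero_mul]
  have hθroot : algebraMap F E θ ∈ p.rootSet E := by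
    rw [Polynomial.mem_rootSet]
    refine ⟨hpne, ?_⟩
    rw [hp, map_mul]
    have : (Polynomial.aeval (algebraMap F E θ)) (minpoly F₀ θ) = 0 := by
      rw [Polynomial.aeval_algebraMap_apply, minpoly.aeval, map_zero]
    rw [this, mul_zero]
  set A : Subalgebra F₀ E := Algebra.adjoin F₀ (p.rootSet E) with hA
  have hFmem : ∀ x : F, algebraMap F E x ∈ A := by
    intro x
    have hx : x ∈ Algebra.adjoin F₀ ({θ} : Set F) := by
      have : Algebra.adjoin F₀ ({θ} : Set F) = ⊤ := by
        rw [← IntermediateField.adjoin_simple_toSubalgebra_of_isAlgebraic hintθ.isAlgebraic, hθ,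
          IntermediateField.top_toSubalgebra]
      rw [this]; exact Algebra.mem_top
    refine Algebra.adjoin_induction
      (p := fun y _ => algebraMap F E y ∈ A) ?_ ?_ ?_ ?_ hx
    · rintro y rfl
      exact Algebra.subset_adjoin hθroot
    · intro r
      rw [← IsScalarTower.algebraMap_apply]
      exact A.algebraMap_mem r
    · intro u v _ _ hu hv; rw [map_add]; exact add_mem hu hv
    · intro u v _ _ hu hv; rw [map_mul]; exact mul_mem hu hv
  haveI hsf : IsSplittingField F₀ E p := by
    constructor
    · exact hsplits
    · refine le_antisymm le_top ?_
      intro z _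
      exact aux_top_le hint hgen A hFmem (Algebra.subset_adjoin hαroot) z
  haveI hnormal : Normal F₀ E := Normal.of_isSplittingField p
  have hmin : minpoly F α = X ^ m - C (algebraMap F₀ F a) :=
    aux_minpoly hm hα hgen hdeg
  have hirr : Irreducible (X ^ m - C (algebraMap F₀ F a)) := by
    rw [← hmin]; exact minpoly.irreducible hint
  haveI : NeZero m := ⟨by omega⟩
  have hsplitsF : ((X ^ m - C (algebraMap F₀ F a)).map (algebraMap F E)).Splits := by
    have : (X ^ m - C (algebraMap F₀ F a)).map (algebraMap F E)
        = X ^ m - C (algebraMap F E (algebraMap F₀ F a)) := by simp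
    rw [this]
    exact X_pow_sub_C_splits_of_isPrimitiveRoot hρ' hα
  haveI hsfF : IsSplittingField F E (X ^ m - C (algebraMap F₀ F a)) := by
    constructor
    · exact hsplitsF
    · refine le_antisymm le_top ?_
      intro z _
      refine aux_top_le hint hgen _ (fun x => Subalgebra.algebraMap_mem _ x) ?_ z
      refine Algebra.subset_adjoin ?_
      rw [Polynomial.mem_rootSet]
      refine ⟨(monic_X_pow_sub_C _ (show m ≠ 0 by omega)).ne_zero, ?_⟩
      rw [map_sub, map_pow, aeval_X, aeval_C, hα, sub_self]
  haveI : IsGalois F E := by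
    have hnz : (primitiveRoots m F).Nonempty :=
      ⟨ρ, (mem_primitiveRoots (by omega)).mpr hρ⟩
    exact isGalois_of_isSplittingField_X_pow_sub_C hnz hirr E
  haveI : Algebra.IsSeparable F₀ F := IsGalois.to_isSeparable
  haveI : Algebra.IsSeparable F E := IsGalois.to_isSeparable
  haveI : Algebra.IsSeparable F₀ E := Algebra.IsSeparable.trans F₀ F E
  exact IsGalois.mk

end Aux3

/-- Let `F/F₀` be quadratic Galois, `ρ ∈ F` a primitive `m`-th root of unity,
`a ∈ F₀^*` with `[F(a^{1/m}) : F] = m`. Then `F(a^{1/m})/F₀` is Galois with dihedral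
Galois group of order `2m` iff `N_{F/F₀}(ρ) = 1`. -/
theorem stmt_7 (F₀ F E : Type) [Field F₀] [Field F] [Field E]
    [Algebra F₀ F] [Algebra F E] [Algebra F₀ E] [IsScalarTower F₀ F E]
    [FiniteDimensional F₀ E]
    [IsGalois F₀ F] (hF : Module.finrank F₀ F = 2)
    (m : ℕ) (hm : 2 ≤ m) (hchar : (m : F₀) ≠ 0)
    (ρ : F) (hρ : IsPrimitiveRoot ρ m)
    (a : F₀) (ha : a ≠ 0)
    (α : E) (hα : α ^ m = algebraMap F E (algebraMap F₀ F a))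
    (hgen : IntermediateField.adjoin F ({α} : Set E) = ⊤)
    (hdeg : Module.finrank F E = m) :
    (IsGalois F₀ E ∧ Nonempty ((E ≃ₐ[F₀] E) ≃* DihedralGroup m)) ↔
      Algebra.norm F₀ ρ = 1 := by
  haveI : NeZero m := ⟨by omega⟩
  haveI : FiniteDimensional F₀ F := FiniteDimensional.left F₀ F E
  haveI : FiniteDimensional F E := FiniteDimensional.right F₀ F E
  have hint : IsIntegral F α := IsIntegral.of_finite F α
  have hρ' : IsPrimitiveRoot (algebraMap F E ρ) m :=
    hρ.map_of_injective (algebraMap F E).injective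
  have hα0 : α ≠ 0 := aux_alpha_ne hm ha hα
  have hρ'0 : algebraMap F E ρ ≠ 0 := by
    rw [map_ne_zero_iff _ (algebraMap F E).injective]
    exact fun h => by simpa [h, zero_pow (by omega : m ≠ 0)] using hρ.pow_eq_one
  obtain ⟨τ, hτα, hτfix⟩ := aux_tau hm hρ hα hgen hdeg
  have hord : orderOf τ = m := aux_orderOf hm hρ ha hα hgen hint τ hτα hτfix
  haveI hGalE : IsGalois F₀ E := aux_isGalois hm hchar hρ ha hα hgen hdeg
  have hcardF : Fintype.card (F ≃ₐ[F₀] F) = 2 := by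
    rw [← Nat.card_eq_fintype_card, IsGalois.card_aut_eq_finrank, hF]
  have hcardG : Fintype.card (E ≃ₐ[F₀] E) = 2 * m := by
    rw [← Nat.card_eq_fintype_card, IsGalois.card_aut_eq_finrank, ← Module.finrank_mul_finrank F₀ F E, hF, hdeg]
  have hres : ∀ (g : E ≃ₐ[F₀] E) (x : F),
      algebraMap F E ((AlgEquiv.restrictNormalHom F g) x) = g (algebraMap F E x) :=
    fun g x => AlgEquiv.restrictNormal_commutes g F x
  have hτinvfix : ∀ x : F, τ⁻¹ (algebraMap F E x) = algebraMap F E x := by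
    intro x
    conv_lhs => rw [← hτfix x]
    rw [← AlgEquiv.mul_apply, inv_mul_cancel, AlgEquiv.one_apply]
  have hτinvα : τ⁻¹ α = algebraMap F E ρ ^ (m - 1) * α := by
    have h1 : τ (algebraMap F E ρ ^ (m - 1) * α) = α := by
      rw [map_mul, map_pow, hτfix ρ, hτα, ← mul_assoc, ← pow_succ]
      have : m - 1 + 1 = m := by omega
      rw [this, hρ'.pow_eq_one, one_mul]
    conv_lhs => rw [← h1]
    rw [← AlgEquiv.mul_apply, inv_mul_cancel, AlgEquiv.one_apply]
  have hfix_pow : ∀ g : E ≃ₐ[F₀] E,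
      (∀ x : F, g (algebraMap F E x) = algebraMap F E x) → ∃ k, g = τ ^ k := by
    intro g hg
    obtain ⟨k, hk, hgα⟩ := aux_root_form hm hρ ha hα g
    refine ⟨k, aux_ext hint hgen g (τ ^ k) ?_ ?_⟩
    · intro x; rw [hg, aux_pow_fix τ hτfix]
    · rw [hgα, aux_pow τ hτα hτfix]
  constructor
  · rintro ⟨hgal, ⟨iso⟩⟩
    by_cases hm2 : m = 2
    · -- ρ = -1 and the norm of -1 is (-1)^2 = 1
      subst hm2
      have hρ2 : ρ = -1 := by
        have h1 : ρ ^ 2 = 1 := hρ.pow_eq_one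
        have h2 : (ρ - 1) * (ρ + 1) = 0 := by linear_combination h1
        rcases mul_eq_zero.mp h2 with h | h
        · exact absurd (sub_eq_zero.mp h) (hρ.ne_one (by omega))
        · exact eq_neg_of_add_eq_zero_left h
      rw [hρ2]
      have : (-1 : F) = algebraMap F₀ F (-1) := by rw [map_neg, map_one]
      rw [this, Algebra.norm_algebraMap, hF]
      norm_num
    · have hm3 : 3 ≤ m := by omega
      obtain ⟨σ, hout, hrel⟩ := aux_from_dihedral hm3 iso τ hord
      set gF := AlgEquiv.restrictNormalHom F σ with hgFdef
      have hgF : gF ≠ 1 := by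
        intro h
        obtain ⟨k, hk⟩ := hfix_pow σ (fun x => by
          have h' : AlgEquiv.restrictNormalHom F σ = 1 := h
          rw [← hres σ x, h', AlgEquiv.one_apply])
        exact hout k hk
      obtain ⟨j, hj, hσα⟩ := aux_root_form hm hρ ha hα σ
      have happ : σ (τ α) = τ⁻¹ (σ α) := by
        have h5 : σ * τ = τ⁻¹ * σ := by
          have := hrel
          rw [← this]; group
        calc σ (τ α) = (σ * τ) α := rfl
          _ = (τ⁻¹ * σ) α := by rw [h5]
          _ = τ⁻¹ (σ α) := rfl
      have key : σ (algebraMap F E ρ) = algebraMap F E ρ ^ (m - 1) := by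
        have hL : σ (τ α) = σ (algebraMap F E ρ) * (algebraMap F E ρ ^ j * α) := by
          rw [hτα, map_mul, hσα]
        have hR : τ⁻¹ (σ α)
            = algebraMap F E ρ ^ j * (algebraMap F E ρ ^ (m-1) * α) := by
          rw [hσα, map_mul, map_pow, hτinvfix ρ, hτinvα]
        have h6 : σ (algebraMap F E ρ) * (algebraMap F E ρ ^ j * α)
            = algebraMap F E ρ ^ (m-1) * (algebraMap F E ρ ^ j * α) := by
          rw [← hL, happ, hR]; ring
        exact mul_right_cancel₀ (mul_ne_zero (pow_ne_zero j hρ'0) hα0) h6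
      have hργ : ρ * gF ρ = 1 := by
        apply (algebraMap F E).injective
        rw [map_mul, map_one, hres, key, ← pow_succ']
        have h7 : m - 1 + 1 = m := by omega
        rw [h7, hρ'.pow_eq_one]
      apply (algebraMap F₀ F).injective
      rw [aux_norm_prod hF gF hgF ρ, map_one, hργ]
  · intro hnorm
    refine ⟨hGalE, ?_⟩
    obtain ⟨gF, hgF⟩ := Fintype.exists_ne_of_one_lt_card (by omega : 1 < Fintype.card (F ≃ₐ[F₀] F)) 1
    have hρgρ : ρ * gF ρ = 1 := by
      have h := aux_norm_prod hF gF hgF ρ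
      rw [hnorm, map_one] at h
      exact h.symm
    have hsurj : Function.Surjective
        (AlgEquiv.restrictNormalHom F : (E ≃ₐ[F₀] E) → F ≃ₐ[F₀] F) :=
      AlgEquiv.restrictNormalHom_surjective E
    obtain ⟨σ, hσg⟩ := hsurj gF
    have hσfix : ∀ x : F, σ (algebraMap F E x) = algebraMap F E (gF x) := by
      intro x
      rw [← hres σ x, hσg]
    have hσρ : σ (algebraMap F E ρ) * algebraMap F E ρ = 1 := by
      rw [hσfix, ← map_mul, mul_comm, hρgρ, map_one]
    obtain ⟨j, hj, hσα⟩ := aux_root_form hm hρ ha hα σ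
    have hgF2 : ∀ x : F, gF (gF x) = x := by
      intro x
      have h2 : gF * gF = 1 := by
        have h3 : gF ^ Fintype.card (F ≃ₐ[F₀] F) = 1 := pow_card_eq_one
        rw [hcardF, pow_two] at h3
        exact h3
      calc gF (gF x) = (gF * gF) x := rfl
        _ = x := by rw [h2, AlgEquiv.one_apply]
    have hσ2 : σ * σ = 1 := by
      apply aux_ext hint hgen
      · intro x
        rw [AlgEquiv.mul_apply, hσfix, hσfix, hgF2, AlgEquiv.one_apply]
      · rw [AlgEquiv.mul_apply, hσα, map_mul, map_pow, hσα, AlgEquiv.one_apply,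
          ← mul_assoc, ← mul_pow, hσρ, one_pow, one_mul]
    have hσinv : σ⁻¹ = σ := inv_eq_of_mul_eq_one_right hσ2
    have hσρ' : σ (algebraMap F E ρ) = algebraMap F E ρ ^ (m - 1) := by
      apply mul_right_cancel₀ hρ'0
      rw [hσρ, ← pow_succ]
      have : m - 1 + 1 = m := by omega
      rw [this, hρ'.pow_eq_one]
    have hrel : σ * τ * σ⁻¹ = τ⁻¹ := by
      rw [hσinv]
      apply aux_ext hint hgen
      · intro x
        rw [AlgEquiv.mul_apply, AlgEquiv.mul_apply, hσfix, hτfix, hσfix, hgF2, hτinvfix]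
      · rw [AlgEquiv.mul_apply, AlgEquiv.mul_apply, hτinvα]
        have hone : (algebraMap F E ρ ^ (m-1)) ^ j * algebraMap F E ρ ^ j = 1 := by
          have hcan : (σ (algebraMap F E ρ)) ^ j * algebraMap F E ρ ^ j = 1 := by
            rw [← mul_pow, hσρ, one_pow]
          rwa [hσρ'] at hcan
        calc σ (τ (σ α)) = σ (τ (algebraMap F E ρ ^ j * α)) := by rw [hσα]
          _ = σ (algebraMap F E ρ ^ j * (algebraMap F E ρ * α)) := by
              rw [map_mul, map_pow, hτfix, hτα]
          _ = (algebraMap F E ρ ^ (m-1)) ^ j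
              * (algebraMap F E ρ ^ (m-1) * (algebraMap F E ρ ^ j * α)) := by
              rw [map_mul, map_pow, map_mul, hσρ', hσα]
          _ = ((algebraMap F E ρ ^ (m-1)) ^ j * algebraMap F E ρ ^ j)
              * (algebraMap F E ρ ^ (m-1) * α) := by ring
          _ = algebraMap F E ρ ^ (m-1) * α := by rw [hone, one_mul]
    have hout : ∀ k : ℕ, σ ≠ τ ^ k := by
      intro k hk
      apply hgF
      apply AlgEquiv.ext
      intro x
      apply (algebraMap F E).injective
      rw [← hσfix x, hk, aux_pow_fix τ hτfix, AlgEquiv.one_apply]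
    exact aux_dihedral hcardG τ σ hord hσ2 hrel hout
end

section
/- Let F/F₀ be a quadratic Galois extension of fields and E/F a cyclic extension of degree m with generator σ of Gal(E/F), with m coprime to char(F₀). Then the corestriction cores_{F/F₀}(E, σ) ∈ H¹(F₀, ℤ/mℤ) is zero if and only if E/F₀ is a Galois extension with dihedral Galois group of order 2m. -/
section Aux
variable (F₀ F E Ω : Type) [Field F₀] [Field F] [Field E] [Field Ω]

section L4
variable [Algebra F₀ F] [Algebra F Ω] [Algebra F₀ Ω] [IsScalarTower F₀ F Ω]

/-- lift an F₀-automorphism fixing F pointwise to an F-automorphism -/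
lemma aux_exists_restrictScalars (γ : Ω ≃ₐ[F₀] Ω)
    (h : ∀ x : F, γ (algebraMap F Ω x) = algebraMap F Ω x) :
    ∃ θ : Ω ≃ₐ[F] Ω, AlgEquiv.restrictScalars F₀ θ = γ := by
  refine ⟨AlgEquiv.ofRingEquiv (f := γ.toRingEquiv) (fun x => h x), ?_⟩
  ext x
  rfl

variable [Normal F₀ F]

lemma aux_restrictNormalHom_eq_one_iff (γ : Ω ≃ₐ[F₀] Ω) :
    AlgEquiv.restrictNormalHom F γ = 1 ↔
      ∀ x : F, γ (algebraMap F Ω x) = algebraMap F Ω x := by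
  constructor
  · intro h x
    have := AlgEquiv.restrictNormal_commutes γ F x
    rw [show γ.restrictNormal F = AlgEquiv.restrictNormalHom F γ from rfl, h] at this
    simpa using this.symm
  · intro h
    ext x
    apply (algebraMap F Ω).injective
    rw [show (AlgEquiv.restrictNormalHom F γ) x = γ.restrictNormal F x from rfl,
      AlgEquiv.restrictNormal_commutes, h]
    rfl

end L4

section L1
variable [Algebra F₀ F] [Algebra F E] [Algebra F₀ E] [IsScalarTower F₀ F E]
  [Algebra F Ω] [Algebra F₀ Ω] [Algebra E Ω]
  [IsScalarTower F₀ F Ω] [IsScalarTower F E Ω] [IsScalarTower F₀ E Ω]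

lemma aux_restrictScalars_restrictNormalHom [Normal F E] [Normal F₀ E] (θ : Ω ≃ₐ[F] Ω) :
    AlgEquiv.restrictScalars F₀ (AlgEquiv.restrictNormalHom E θ) =
      AlgEquiv.restrictNormalHom E (AlgEquiv.restrictScalars F₀ θ) := by
  ext x
  apply (algebraMap E Ω).injective
  rw [show (AlgEquiv.restrictScalars F₀ (AlgEquiv.restrictNormalHom E θ)) x
      = (θ.restrictNormal E) x from rfl,
    show (AlgEquiv.restrictNormalHom E (AlgEquiv.restrictScalars F₀ θ)) x
      = ((AlgEquiv.restrictScalars F₀ θ).restrictNormal E) x from rfl,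
    AlgEquiv.restrictNormal_commutes, AlgEquiv.restrictNormal_commutes]
  rfl

lemma aux_restrictNormalHom_comp [Normal F₀ F] [Normal F₀ E] (γ : Ω ≃ₐ[F₀] Ω) :
    AlgEquiv.restrictNormalHom F (AlgEquiv.restrictNormalHom E γ) =
      AlgEquiv.restrictNormalHom F γ := by
  ext x
  apply (algebraMap F Ω).injective
  rw [show (AlgEquiv.restrictNormalHom F γ) x = γ.restrictNormal F x from rfl,
    AlgEquiv.restrictNormal_commutes]
  have h1 : algebraMap F Ω ((AlgEquiv.restrictNormalHom F (AlgEquiv.restrictNormalHom E γ)) x)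
      = algebraMap E Ω (algebraMap F E ((AlgEquiv.restrictNormalHom F
        (AlgEquiv.restrictNormalHom E γ)) x)) := by
    rw [← IsScalarTower.algebraMap_apply]
  rw [h1,
    show (AlgEquiv.restrictNormalHom F (AlgEquiv.restrictNormalHom E γ)) x
      = ((AlgEquiv.restrictNormalHom E γ).restrictNormal F) x from rfl,
    AlgEquiv.restrictNormal_commutes,
    show (AlgEquiv.restrictNormalHom E γ) (algebraMap F E x) = (γ.restrictNormal E)
      (algebraMap F E x) from rfl,
    AlgEquiv.restrictNormal_commutes, ← IsScalarTower.algebraMap_apply]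

end L1
end Aux

open DihedralGroup in
/-- key dihedral group computation -/
lemma aux_dihedral_s10 {G : Type} [Group G] {m : ℕ} (hm : 2 ≤ m)
    (e : G ≃* DihedralGroup m) (s t : G) (hs : orderOf s = m)
    (ht : t ∉ Subgroup.zpowers s) : t ^ 2 = 1 ∧ t * s * t⁻¹ = s⁻¹ := by
  haveI : NeZero m := ⟨by omega⟩
  rcases eq_or_lt_of_le hm with hm2 | hm3
  · -- m = 2 : DihedralGroup 2 has exponent 2 and is abelian
    subst hm2
    have hd2 : ∀ x : DihedralGroup 2, x ^ 2 = 1 := by decide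
    have hd2' : ∀ x y : DihedralGroup 2, x * y = y * x := by decide
    have hsq : ∀ a : G, a ^ 2 = 1 := fun a => by
      have := congrArg e.symm (hd2 (e a)); simpa using this
    have hcomm : ∀ a b : G, a * b = b * a := fun a b => by
      have := congrArg e.symm (hd2' (e a) (e b)); simpa using this
    have hsinv : s⁻¹ = s := inv_eq_of_mul_eq_one_right (by rw [← sq]; exact hsq s)
    refine ⟨hsq t, ?_⟩
    rw [hcomm t s, mul_assoc, mul_inv_cancel, mul_one, hsinv]
  · -- m ≥ 3
    set g := e s with hg
    set x := e t with hx
    have hog : orderOf g = m := by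
      have h0 := orderOf_injective e.toMonoidHom e.injective s
      rw [hs] at h0
      exact h0
    have hxg : x ∉ Subgroup.zpowers g := by
      intro hmem
      apply ht
      rw [Subgroup.mem_zpowers_iff] at hmem ⊢
      obtain ⟨k, hk⟩ := hmem
      exact ⟨k, e.injective (by rw [map_zpow, ← hg, hk, hx])⟩
    obtain ⟨j, hj⟩ | ⟨j, hj⟩ : (∃ j, g = r j) ∨ (∃ j, g = sr j) := by
      cases g with
      | r j => exact Or.inl ⟨j, rfl⟩
      | sr j => exact Or.inr ⟨j, rfl⟩
    swap
    · exfalso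
      rw [hj, orderOf_sr] at hog
      omega
    -- zpowers (r j) = zpowers (r 1)
    have hrj : Subgroup.zpowers (r j : DihedralGroup m) = Subgroup.zpowers (r 1) := by
      have hle : Subgroup.zpowers (r j : DihedralGroup m) ≤ Subgroup.zpowers (r 1) := by
        rw [Subgroup.zpowers_le]
        exact ⟨(j.val : ℤ), by show r 1 ^ ((_ : ℕ) : ℤ) = _; rw [zpow_natCast, r_one_pow, ZMod.natCast_val, ZMod.cast_id]⟩
      apply le_antisymm hle
      have hcard : Nat.card (Subgroup.zpowers (r 1 : DihedralGroup m))
          ≤ Nat.card (Subgroup.zpowers (r j : DihedralGroup m)) := by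
        rw [Nat.card_zpowers, Nat.card_zpowers, orderOf_r_one, ← hj, hog]
      rw [Subgroup.eq_of_le_of_card_ge hle hcard]
    obtain ⟨i, hi⟩ | ⟨i, hi⟩ : (∃ i, x = r i) ∨ (∃ i, x = sr i) := by
      cases x with
      | r i => exact Or.inl ⟨i, rfl⟩
      | sr i => exact Or.inr ⟨i, rfl⟩
    · exfalso
      apply hxg
      rw [hi, hj, hrj]
      exact ⟨(i.val : ℤ), by show r 1 ^ ((_ : ℕ) : ℤ) = _; rw [zpow_natCast, r_one_pow, ZMod.natCast_val, ZMod.cast_id]⟩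
    -- x = sr i
    constructor
    · apply e.injective
      rw [map_pow, ← hx, hi, sq, sr_mul_self, map_one]
    · apply e.injective
      rw [map_mul, map_mul, map_inv, ← hx, ← hg, hi, hj, map_inv, ← hg, hj]
      have hsrinv : (sr i : DihedralGroup m)⁻¹ = sr i :=
        inv_eq_of_mul_eq_one_right (sr_mul_self i)
      rw [hsrinv, sr_mul_r, sr_mul_sr]
      have : (r j : DihedralGroup m)⁻¹ = r (-j) := by
        apply inv_eq_of_mul_eq_one_right
        rw [r_mul_r, add_neg_cancel, one_def]
      rw [this]
      ring_nf

/-- If `x₀` is separable over `F` and not in the intermediate field `K`, there is an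
automorphism of the algebraically closed field `Ω` fixing `K` pointwise and moving `x₀`. -/
lemma aux_move {F Ω : Type} [Field F] [Field Ω] [Algebra F Ω] [IsAlgClosed Ω]
    [Algebra.IsAlgebraic F Ω] (K : IntermediateField F Ω) (x₀ : Ω)
    (hx : IsSeparable F x₀) (hxK : x₀ ∉ K) :
    ∃ g : Ω ≃ₐ[F] Ω, (∀ z ∈ K, g z = z) ∧ g x₀ ≠ x₀ := by
  haveI : Algebra.IsAlgebraic (↥K) Ω := Algebra.IsAlgebraic.tower_top (K := F) (L := ↥K)
  haveI : IsAlgClosure (↥K) Ω := ⟨inferInstance, inferInstance⟩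
  haveI : Normal (↥K) Ω := IsAlgClosure.normal (↥K) Ω
  have hint : IsIntegral (↥K) x₀ := Algebra.IsIntegral.isIntegral x₀
  have hsepK : IsSeparable (↥K) x₀ := IsSeparable.tower_top (↥K) hx
  set p := minpoly (↥K) x₀ with hp
  have hdeg : 2 ≤ p.natDegree := by
    rw [hp, minpoly.two_le_natDegree_iff hint]
    rintro ⟨k, hk⟩
    exact hxK (hk ▸ k.2)
  have hcard : Fintype.card (p.rootSet Ω) = p.natDegree :=
    Polynomial.card_rootSet_eq_natDegree hsepK (IsAlgClosed.splits _)
  have hmem : x₀ ∈ p.rootSet Ω := by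
    rw [Polynomial.mem_rootSet]
    exact ⟨minpoly.ne_zero hint, minpoly.aeval _ _⟩
  obtain ⟨y, hy⟩ := Fintype.exists_ne_of_one_lt_card (lt_of_lt_of_eq (by omega) hcard.symm)
    (⟨x₀, hmem⟩ : p.rootSet Ω)
  have h_ev : Polynomial.aeval (y : Ω) p = 0 := (Polynomial.mem_rootSet.mp y.2).2
  obtain ⟨g', hg'⟩ := minpoly.exists_algEquiv_of_root'
    (Algebra.IsAlgebraic.isAlgebraic (R := ↥K) x₀) h_ev
  refine ⟨AlgEquiv.restrictScalars F g', fun z hz => ?_, ?_⟩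
  · have : g' (algebraMap (↥K) Ω ⟨z, hz⟩) = algebraMap (↥K) Ω ⟨z, hz⟩ := g'.commutes _
    simpa using this
  · rw [AlgEquiv.restrictScalars_apply, hg']
    intro h
    exact hy (Subtype.ext h)

section AuxK
variable {F₀ F Ω : Type} [Field F₀] [Field F] [Field Ω]
  [Algebra F₀ F] [Algebra F Ω] [Algebra F₀ Ω] [IsScalarTower F₀ F Ω] [Normal F₀ F]

/-- The image of an intermediate field of `Ω/F` under an `F₀`-automorphism of `Ω`,
as an intermediate field of `Ω/F`. -/
noncomputable def auxK (Ei : IntermediateField F Ω) (u : Ω ≃ₐ[F₀] Ω) :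
    IntermediateField F Ω :=
  Subfield.toIntermediateField (Ei.toSubfield.map (u : Ω →+* Ω)) (by
    intro x
    rw [Subfield.mem_map]
    refine ⟨algebraMap F Ω ((u.restrictNormal F).symm x), Ei.algebraMap_mem _, ?_⟩
    have := AlgEquiv.restrictNormal_commutes u F ((u.restrictNormal F).symm x)
    rw [show ((u : Ω →+* Ω) : Ω → Ω) = (u : Ω → Ω) from rfl, ← this]
    simp)

lemma auxK_mem (Ei : IntermediateField F Ω) (u : Ω ≃ₐ[F₀] Ω) (x : Ω) :
    x ∈ auxK Ei u ↔ ∃ y ∈ Ei, u y = x := by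
  rw [show (x ∈ auxK Ei u) = (x ∈ Ei.toSubfield.map (u : Ω →+* Ω)) from rfl, Subfield.mem_map]
  rfl

end AuxK

/-- Let `F/F₀` be quadratic Galois and `E/F` cyclic of degree `m` with generator `σ`,
`m` coprime to `char F₀`.  The class of `(E, σ)` in `H¹(F, ℤ/m)` is the character
`φ : Gal(Ω/F) → ℤ/m` obtained by composing the restriction `Gal(Ω/F) → Gal(E/F)` with the
isomorphism `Gal(E/F) ≅ ℤ/m` sending `σ` to `1` (here `Ω` is an algebraic closure).
Its corestriction to `F₀` is given by `cores(φ)(θ) = φ(θ) + φ(τθτ⁻¹)` for `θ ∈ Gal(Ω/F)`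
and `cores(φ)(τ) = φ(τ²)`, where `τ ∈ Gal(Ω/F₀)` is any lift of the nontrivial automorphism
of `F/F₀`.  Then `cores_{F/F₀}(E, σ) = 0` iff `E/F₀` is Galois with dihedral Galois group
of order `2m`. -/
theorem stmt_10 (F₀ F E Ω : Type) [Field F₀] [Field F] [Field E] [Field Ω]
    [Algebra F₀ F] [Algebra F E] [Algebra F₀ E] [IsScalarTower F₀ F E]
    [Algebra F₀ Ω] [Algebra F Ω] [Algebra E Ω]
    [IsScalarTower F₀ F Ω] [IsScalarTower F E Ω] [IsScalarTower F₀ E Ω]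
    [IsAlgClosed Ω] [Algebra.IsAlgebraic F₀ Ω]
    [IsGalois F₀ F] (hF : Module.finrank F₀ F = 2)
    [FiniteDimensional F E] [IsGalois F E]
    (m : ℕ) (hm : 2 ≤ m) (hchar : (m : F₀) ≠ 0)
    (hdeg : Module.finrank F E = m)
    (σ : E ≃ₐ[F] E) (hσ : ∀ g : E ≃ₐ[F] E, g ∈ Subgroup.zpowers σ)
    (φ₀ : (E ≃ₐ[F] E) →* Multiplicative (ZMod m))
    (hφ₀ : Function.Bijective φ₀)
    (hφ₀σ : φ₀ σ = Multiplicative.ofAdd (1 : ZMod m))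
    (τ : Ω ≃ₐ[F₀] Ω)
    (hτ : AlgEquiv.restrictNormalHom F τ ≠ 1) :
    ((∀ θ θ' : Ω ≃ₐ[F] Ω,
        AlgEquiv.restrictScalars F₀ θ' = τ * AlgEquiv.restrictScalars F₀ θ * τ⁻¹ →
        φ₀ (AlgEquiv.restrictNormalHom E θ') * φ₀ (AlgEquiv.restrictNormalHom E θ) = 1) ∧
      (∀ θ : Ω ≃ₐ[F] Ω, AlgEquiv.restrictScalars F₀ θ = τ ^ 2 →
        φ₀ (AlgEquiv.restrictNormalHom E θ) = 1)) ↔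
      (IsGalois F₀ E ∧ Nonempty ((E ≃ₐ[F₀] E) ≃* DihedralGroup m)) := by
  classical
  haveI : NeZero m := ⟨by omega⟩
  haveI : FiniteDimensional F₀ F := FiniteDimensional.of_finrank_pos (by rw [hF]; norm_num)
  haveI : FiniteDimensional F₀ E := FiniteDimensional.trans F₀ F E
  haveI : Algebra.IsAlgebraic F Ω := Algebra.IsAlgebraic.tower_top (K := F₀) (L := F)
  haveI : IsAlgClosure F Ω := ⟨inferInstance, inferInstance⟩
  haveI : Normal F Ω := IsAlgClosure.normal F Ω
  haveI : IsAlgClosure F₀ Ω := ⟨inferInstance, inferInstance⟩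
  haveI : Normal F₀ Ω := IsAlgClosure.normal F₀ Ω
  have hφinj : Function.Injective φ₀ := hφ₀.1
  -- φ₀ g = 1 → g = 1
  have hφone : ∀ g : E ≃ₐ[F] E, φ₀ g = 1 → g = 1 := fun g hg =>
    hφinj (by rw [hg, map_one])
  have hcardF : Fintype.card (F ≃ₐ[F₀] F) = 2 := by
    rw [← Nat.card_eq_fintype_card, IsGalois.card_aut_eq_finrank]; exact hF
  -- a group of order two has a unique nontrivial element
  have htwo : ∀ g h : (F ≃ₐ[F₀] F), g ≠ 1 → h ≠ 1 → g = h := by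
    intro g h hg hh
    have h2 : Nat.card (F ≃ₐ[F₀] F) = 2 := by
      rw [Nat.card_eq_fintype_card, hcardF]
    rw [Nat.card_eq_two_iff' (1 : F ≃ₐ[F₀] F)] at h2
    obtain ⟨b, -, hb⟩ := h2
    rw [hb g hg, hb h hh]
  have hordσ : orderOf σ = m := by
    rw [orderOf_eq_card_of_forall_mem_zpowers hσ,
      IsGalois.card_aut_eq_finrank, hdeg]
  -- restriction of scalars as a monoid hom
  let resSc : (E ≃ₐ[F] E) →* (E ≃ₐ[F₀] E) :=
    MonoidHom.mk' (fun g => AlgEquiv.restrictScalars F₀ g) (fun g h => rfl)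
  have hresScInj : Function.Injective resSc := AlgEquiv.restrictScalars_injective F₀
  set s₀ : E ≃ₐ[F₀] E := resSc σ with hs₀def
  have hords₀ : orderOf s₀ = m := by
    rw [hs₀def, orderOf_injective resSc hresScInj, hordσ]
  -- s₀ fixes F pointwise, so its restriction to F is trivial
  have hs₀F : AlgEquiv.restrictNormalHom F s₀ = 1 := by
    rw [aux_restrictNormalHom_eq_one_iff F₀ F E]
    intro x
    exact σ.commutes x
  have hcardD : Fintype.card (DihedralGroup m) = 2 * m := DihedralGroup.card
  constructor
  · rintro ⟨hA, hB⟩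
    -- Step 1 : stability of E under τ
    set Ei : IntermediateField F Ω := (IsScalarTower.toAlgHom F E Ω).fieldRange with hEidef
    have hEimem : ∀ x : Ω, x ∈ Ei ↔ ∃ e : E, algebraMap E Ω e = x := by
      intro x
      rw [hEidef, AlgHom.mem_fieldRange]
      rfl
    -- the "core" construction
    have core : ∀ u : Ω ≃ₐ[F₀] Ω, ¬ (∀ x ∈ Ei, x ∈ auxK Ei u) →
        ∃ θ : Ω ≃ₐ[F] Ω, (∀ z ∈ auxK Ei u, θ z = z) ∧
          AlgEquiv.restrictNormalHom E θ ≠ 1 := by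
      intro u hne
      push_neg at hne
      obtain ⟨x₀, hx₀Ei, hx₀K⟩ := hne
      obtain ⟨e₀, he₀⟩ := (hEimem x₀).mp hx₀Ei
      have hsep : IsSeparable F x₀ := by
        rw [IsSeparable, ← he₀, minpoly.algebraMap_eq (algebraMap E Ω).injective e₀]
        exact Algebra.IsSeparable.isSeparable F e₀
      obtain ⟨g, hg1, hg2⟩ := aux_move (auxK Ei u) x₀ hsep hx₀K
      refine ⟨g, hg1, fun h1 => ?_⟩
      apply hg2
      rw [← he₀]
      have := AlgEquiv.restrictNormal_commutes g E e₀
      rw [show g.restrictNormal E = AlgEquiv.restrictNormalHom E g from rfl, h1] at this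
      rw [← this]
      rfl
    -- fixing auxK pointwise implies restriction to E of the conjugate is trivial
    have hresE_one : ∀ θ' : Ω ≃ₐ[F] Ω, (∀ e : E, θ' (algebraMap E Ω e) = algebraMap E Ω e) →
        AlgEquiv.restrictNormalHom E θ' = 1 := by
      intro θ' hfix
      ext e
      apply (algebraMap E Ω).injective
      rw [show (AlgEquiv.restrictNormalHom E θ') e = θ'.restrictNormal E e from rfl,
        AlgEquiv.restrictNormal_commutes, hfix e]
      rfl
    -- (a) : Ei ⊆ τ '' Ei
    have hsub1 : ∀ x ∈ Ei, x ∈ auxK Ei τ := by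
      by_contra hne
      push_neg at hne
      obtain ⟨θ, hfix, hne1⟩ := core τ (by push_neg; exact hne)
      have hfixF : ∀ x : F, (τ⁻¹ * AlgEquiv.restrictScalars F₀ θ * τ) (algebraMap F Ω x)
          = algebraMap F Ω x := by
        intro x
        have hmem : τ (algebraMap F Ω x) ∈ auxK Ei τ :=
          (auxK_mem Ei τ _).mpr ⟨algebraMap F Ω x, Ei.algebraMap_mem x, rfl⟩
        show τ⁻¹ ((AlgEquiv.restrictScalars F₀ θ) (τ (algebraMap F Ω x))) = _
        rw [show (AlgEquiv.restrictScalars F₀ θ) (τ (algebraMap F Ω x))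
          = θ (τ (algebraMap F Ω x)) from rfl, hfix _ hmem]
        exact τ.symm_apply_apply _
      obtain ⟨θ', hθ'⟩ := aux_exists_restrictScalars F₀ F Ω _ hfixF
      have hrel : AlgEquiv.restrictScalars F₀ θ = τ * AlgEquiv.restrictScalars F₀ θ' * τ⁻¹ := by
        rw [hθ']; group
      have hAres := hA θ' θ hrel
      have hresθ' : AlgEquiv.restrictNormalHom E θ' = 1 := by
        apply hresE_one
        intro e
        have : θ' (algebraMap E Ω e) = (τ⁻¹ * AlgEquiv.restrictScalars F₀ θ * τ)
            (algebraMap E Ω e) := by rw [← hθ']; rfl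
        rw [this]
        have hmem : τ (algebraMap E Ω e) ∈ auxK Ei τ :=
          (auxK_mem Ei τ _).mpr ⟨algebraMap E Ω e, (hEimem _).mpr ⟨e, rfl⟩, rfl⟩
        show τ⁻¹ ((AlgEquiv.restrictScalars F₀ θ) (τ (algebraMap E Ω e))) = _
        rw [show (AlgEquiv.restrictScalars F₀ θ) (τ (algebraMap E Ω e))
          = θ (τ (algebraMap E Ω e)) from rfl, hfix _ hmem]
        exact τ.symm_apply_apply _
      rw [hresθ', map_one, mul_one] at hAres
      exact hne1 (hφone _ hAres)
    -- (b) : Ei ⊆ τ⁻¹ '' Ei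
    have hsub2 : ∀ x ∈ Ei, x ∈ auxK Ei τ⁻¹ := by
      by_contra hne
      push_neg at hne
      obtain ⟨θ, hfix, hne1⟩ := core τ⁻¹ (by push_neg; exact hne)
      have hfixF : ∀ x : F, (τ * AlgEquiv.restrictScalars F₀ θ * τ⁻¹) (algebraMap F Ω x)
          = algebraMap F Ω x := by
        intro x
        have hmem : τ⁻¹ (algebraMap F Ω x) ∈ auxK Ei τ⁻¹ :=
          (auxK_mem Ei τ⁻¹ _).mpr ⟨algebraMap F Ω x, Ei.algebraMap_mem x, rfl⟩
        show τ ((AlgEquiv.restrictScalars F₀ θ) (τ⁻¹ (algebraMap F Ω x))) = _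
        rw [show (AlgEquiv.restrictScalars F₀ θ) (τ⁻¹ (algebraMap F Ω x))
          = θ (τ⁻¹ (algebraMap F Ω x)) from rfl, hfix _ hmem]
        exact τ.apply_symm_apply _
      obtain ⟨θ', hθ'⟩ := aux_exists_restrictScalars F₀ F Ω _ hfixF
      have hAres := hA θ θ' hθ'
      have hresθ' : AlgEquiv.restrictNormalHom E θ' = 1 := by
        apply hresE_one
        intro e
        have : θ' (algebraMap E Ω e) = (τ * AlgEquiv.restrictScalars F₀ θ * τ⁻¹)
            (algebraMap E Ω e) := by rw [← hθ']; rfl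
        rw [this]
        have hmem : τ⁻¹ (algebraMap E Ω e) ∈ auxK Ei τ⁻¹ :=
          (auxK_mem Ei τ⁻¹ _).mpr ⟨algebraMap E Ω e, (hEimem _).mpr ⟨e, rfl⟩, rfl⟩
        show τ ((AlgEquiv.restrictScalars F₀ θ) (τ⁻¹ (algebraMap E Ω e))) = _
        rw [show (AlgEquiv.restrictScalars F₀ θ) (τ⁻¹ (algebraMap E Ω e))
          = θ (τ⁻¹ (algebraMap E Ω e)) from rfl, hfix _ hmem]
        exact τ.apply_symm_apply _
      rw [hresθ', map_one, one_mul] at hAres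
      exact hne1 (hφone _ hAres)
    -- τ maps Ei into Ei (from hsub2), and τ⁻¹ maps Ei into Ei (from hsub1)
    have hstab : ∀ x ∈ Ei, τ x ∈ Ei := by
      intro x hx
      obtain ⟨y, hy, hyx⟩ := (auxK_mem Ei τ⁻¹ x).mp (hsub2 x hx)
      have hxy : τ x = y := by
        rw [← hyx]
        exact τ.apply_symm_apply y
      rw [hxy]; exact hy
    have hstab' : ∀ x ∈ Ei, τ⁻¹ x ∈ Ei := by
      intro x hx
      obtain ⟨y, hy, hyx⟩ := (auxK_mem Ei τ x).mp (hsub1 x hx)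
      have : τ⁻¹ x = y := by rw [← hyx]; exact τ.symm_apply_apply y
      rw [this]; exact hy
    -- Step 2 : E/F₀ is normal
    haveI hnormE : Normal F₀ E := by
      set Ei₀ : IntermediateField F₀ Ω := (IsScalarTower.toAlgHom F₀ E Ω).fieldRange with hEi₀def
      have hmem0 : ∀ x : Ω, x ∈ Ei₀ ↔ x ∈ Ei := by
        intro x
        rw [hEi₀def, AlgHom.mem_fieldRange, hEimem]
        rfl
      haveI hnorm0 : Normal F₀ Ei₀ := by
        rw [IntermediateField.normal_iff_forall_map_le']
        intro γ
        rw [← SetLike.coe_subset_coe, IntermediateField.coe_map]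
        rintro _ ⟨y, hy, rfl⟩
        show γ y ∈ Ei₀
        rw [SetLike.mem_coe, hmem0] at hy
        rw [hmem0]
        by_cases hγ : AlgEquiv.restrictNormalHom F γ = 1
        · have hfixF := (aux_restrictNormalHom_eq_one_iff F₀ F Ω γ).mp hγ
          obtain ⟨θ, hθ⟩ := aux_exists_restrictScalars F₀ F Ω γ hfixF
          have hγy : γ y = θ y := by rw [← hθ]; rfl
          rw [hγy]
          obtain ⟨ey, hey⟩ := (hEimem y).mp hy
          rw [← hey, hEimem]
          exact ⟨θ.restrictNormal E ey, AlgEquiv.restrictNormal_commutes θ E ey⟩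
        · have hγτ : AlgEquiv.restrictNormalHom F γ = AlgEquiv.restrictNormalHom F τ :=
            htwo _ _ hγ hτ
          have hfixF : ∀ x : F, (γ * τ⁻¹) (algebraMap F Ω x) = algebraMap F Ω x := by
            apply (aux_restrictNormalHom_eq_one_iff F₀ F Ω _).mp
            rw [map_mul, map_inv, hγτ, mul_inv_cancel]
          obtain ⟨θ, hθ⟩ := aux_exists_restrictScalars F₀ F Ω _ hfixF
          have hγy : γ y = θ (τ y) := by
            have hγeq : γ = AlgEquiv.restrictScalars F₀ θ * τ := by rw [hθ]; group
            rw [hγeq]; rfl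
          rw [hγy]
          obtain ⟨ey, hey⟩ := (hEimem _).mp (hstab y hy)
          rw [← hey, hEimem]
          exact ⟨θ.restrictNormal E ey, AlgEquiv.restrictNormal_commutes θ E ey⟩
      -- transfer normality along the isomorphism E ≃ₐ[F₀] Ei₀
      have hbij : Function.Bijective
          ((IsScalarTower.toAlgHom F₀ E Ω).codRestrict Ei₀.toSubalgebra
            (fun e => (hmem0 _).mpr ((hEimem _).mpr ⟨e, rfl⟩))) := by
        constructor
        · intro a b hab
          apply (algebraMap E Ω).injective
          exact congrArg Subtype.val hab
        · rintro ⟨x, hx⟩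
          obtain ⟨e, he⟩ := (hEimem x).mp ((hmem0 x).mp hx)
          exact ⟨e, Subtype.ext he⟩
      have eqv : E ≃ₐ[F₀] ↥Ei₀ := AlgEquiv.ofBijective _ hbij
      exact Normal.of_algEquiv eqv.symm
    haveI : Algebra.IsSeparable F₀ E := Algebra.IsSeparable.trans F₀ F E
    haveI hGalE : IsGalois F₀ E := ⟨⟩
    -- Step 3 : the relations
    set t : E ≃ₐ[F₀] E := AlgEquiv.restrictNormalHom E τ with htdef
    have L1 : ∀ θ : Ω ≃ₐ[F] Ω, AlgEquiv.restrictScalars F₀ (AlgEquiv.restrictNormalHom E θ) =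
        AlgEquiv.restrictNormalHom E (AlgEquiv.restrictScalars F₀ θ) :=
      fun θ => aux_restrictScalars_restrictNormalHom F₀ F E Ω θ
    have hresFτ2 : ∀ x : F, (τ ^ 2) (algebraMap F Ω x) = algebraMap F Ω x := by
      apply (aux_restrictNormalHom_eq_one_iff F₀ F Ω _).mp
      rw [map_pow]
      have hpc := pow_card_eq_one (x := AlgEquiv.restrictNormalHom F τ)
      rwa [hcardF] at hpc
    obtain ⟨θ₂, hθ₂⟩ := aux_exists_restrictScalars F₀ F Ω _ hresFτ2
    have hres2 : AlgEquiv.restrictNormalHom E θ₂ = 1 := hφone _ (hB θ₂ hθ₂)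
    have ht2 : t ^ 2 = 1 := by
      rw [htdef, ← map_pow, ← hθ₂, ← L1 θ₂, hres2]
      exact map_one resSc
    obtain ⟨θσ, hθσ⟩ := AlgEquiv.restrictNormalHom_surjective (F := F) (K₁ := E) (E := Ω) σ
    have hfixσ : ∀ x : F, (τ * AlgEquiv.restrictScalars F₀ θσ * τ⁻¹) (algebraMap F Ω x)
        = algebraMap F Ω x := by
      apply (aux_restrictNormalHom_eq_one_iff F₀ F Ω _).mp
      rw [map_mul, map_mul, map_inv]
      have h1 : AlgEquiv.restrictNormalHom F (AlgEquiv.restrictScalars F₀ θσ) = 1 := by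
        rw [aux_restrictNormalHom_eq_one_iff F₀ F Ω]
        intro x
        exact θσ.commutes x
      rw [h1, mul_one, mul_inv_cancel]
    obtain ⟨θ', hθ'⟩ := aux_exists_restrictScalars F₀ F Ω _ hfixσ
    have hAresσ := hA θσ θ' hθ'
    have hresθ' : AlgEquiv.restrictNormalHom E θ' = σ⁻¹ := by
      apply hφinj
      rw [map_inv]
      rw [hθσ] at hAresσ
      exact eq_inv_of_mul_eq_one_left hAresσ
    have hconj : t * s₀ * t⁻¹ = s₀⁻¹ := by
      have e1 : s₀ = AlgEquiv.restrictNormalHom E (AlgEquiv.restrictScalars F₀ θσ) := by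
        rw [← L1 θσ, hθσ]
        rfl
      calc t * s₀ * t⁻¹
          = AlgEquiv.restrictNormalHom E (τ * AlgEquiv.restrictScalars F₀ θσ * τ⁻¹) := by
            rw [map_mul, map_mul, map_inv, ← htdef, ← e1]
        _ = AlgEquiv.restrictNormalHom E (AlgEquiv.restrictScalars F₀ θ') := by rw [hθ']
        _ = AlgEquiv.restrictScalars F₀ (AlgEquiv.restrictNormalHom E θ') := (L1 θ').symm
        _ = AlgEquiv.restrictScalars F₀ (σ⁻¹) := by rw [hresθ']
        _ = s₀⁻¹ := map_inv resSc σ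
    have htns : t ∉ Subgroup.zpowers s₀ := by
      intro hmem
      rw [Subgroup.mem_zpowers_iff] at hmem
      obtain ⟨k, hk⟩ := hmem
      apply hτ
      rw [← aux_restrictNormalHom_comp F₀ F E Ω τ, ← htdef, ← hk, map_zpow, hs₀F, one_zpow]
    -- Step 4 : build the isomorphism with the dihedral group
    have hcardE₀ : Fintype.card (E ≃ₐ[F₀] E) = 2 * m := by
      rw [← Nat.card_eq_fintype_card, IsGalois.card_aut_eq_finrank, ← Module.finrank_mul_finrank F₀ F E, hF, hdeg]
    set π : ZMod m → (E ≃ₐ[F₀] E) := fun i => s₀ ^ i.val with hπdef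
    have hπadd : ∀ i j : ZMod m, π (i + j) = π i * π j := by
      intro i j
      show s₀ ^ (i + j).val = s₀ ^ i.val * s₀ ^ j.val
      rw [← pow_add, pow_eq_pow_iff_modEq, hords₀, ZMod.val_add]
      exact Nat.mod_modEq _ m
    have hπ0 : π 0 = 1 := by
      show s₀ ^ (0 : ZMod m).val = 1
      rw [ZMod.val_zero, pow_zero]
    have hπinj : Function.Injective π := by
      intro i j hij
      have h2 := pow_eq_pow_iff_modEq.mp hij
      rw [hords₀, Nat.ModEq, Nat.mod_eq_of_lt (ZMod.val_lt i),
        Nat.mod_eq_of_lt (ZMod.val_lt j)] at h2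
      exact ZMod.val_injective m h2
    have hπzp : ∀ i : ZMod m, π i ∈ Subgroup.zpowers s₀ := fun i =>
      ⟨(i.val : ℤ), by show s₀ ^ ((i.val : ℕ) : ℤ) = π i; rw [zpow_natCast]⟩
    have hπinv : ∀ i : ZMod m, (π i)⁻¹ = π (-i) := by
      intro i
      apply inv_eq_of_mul_eq_one_right
      rw [← hπadd, add_neg_cancel, hπ0]
    have hπconj : ∀ i : ZMod m, t * π i * t⁻¹ = π (-i) := by
      intro i
      have h1 : t * π i * t⁻¹ = (t * s₀ * t⁻¹) ^ i.val := by rw [conj_pow]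
      rw [h1, hconj, inv_pow]
      exact hπinv i
    have hπt : ∀ i : ZMod m, π i * t = t * π (-i) := by
      intro i
      have h := hπconj (-i)
      rw [neg_neg] at h
      rw [← h]
      group
    let f : DihedralGroup m → (E ≃ₐ[F₀] E) := fun x =>
      match x with
      | DihedralGroup.r i => π i
      | DihedralGroup.sr i => t * π i
    have hfmul : ∀ x y : DihedralGroup m, f (x * y) = f x * f y := by
      rintro (i | i) (j | j)
      · show π (i + j) = π i * π j
        exact hπadd i j
      · show t * π (j - i) = π i * (t * π j)
        rw [← mul_assoc, hπt i, mul_assoc, ← hπadd, sub_eq_neg_add]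
      · show t * π (i + j) = (t * π i) * π j
        rw [hπadd, mul_assoc]
      · show π (j - i) = (t * π i) * (t * π j)
        rw [show (t * π i) * (t * π j) = t * (π i * t) * π j by group, hπt i,
          show t * (t * π (-i)) * π j = (t * t) * (π (-i) * π j) by group, ← sq, ht2, one_mul,
          ← hπadd, sub_eq_neg_add]
    have hfinj : Function.Injective f := by
      rintro (i | i) (j | j) hij
      · rw [show f (DihedralGroup.r i) = π i from rfl,
          show f (DihedralGroup.r j) = π j from rfl] at hij
        rw [hπinj hij]
      · exfalso
        rw [show f (DihedralGroup.r i) = π i from rfl,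
          show f (DihedralGroup.sr j) = t * π j from rfl] at hij
        apply htns
        have h2 : t = π i * (π j)⁻¹ := by rw [hij]; group
        rw [h2, hπinv]
        exact Subgroup.mul_mem _ (hπzp i) (hπzp (-j))
      · exfalso
        rw [show f (DihedralGroup.sr i) = t * π i from rfl,
          show f (DihedralGroup.r j) = π j from rfl] at hij
        apply htns
        have h2 : t = π j * (π i)⁻¹ := by rw [← hij]; group
        rw [h2, hπinv]
        exact Subgroup.mul_mem _ (hπzp j) (hπzp (-i))
      · rw [show f (DihedralGroup.sr i) = t * π i from rfl,
          show f (DihedralGroup.sr j) = t * π j from rfl] at hij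
        rw [hπinj (mul_left_cancel hij)]
    have hbij : Function.Bijective f :=
      (Fintype.bijective_iff_injective_and_card f).mpr ⟨hfinj, by rw [hcardD, hcardE₀]⟩
    exact ⟨hGalE, ⟨(MulEquiv.ofBijective (MonoidHom.mk' f hfmul) hbij).symm⟩⟩
  · rintro ⟨hGalE, ⟨e⟩⟩
    haveI := hGalE
    haveI hnormE : Normal F₀ E := inferInstance
    set t : E ≃ₐ[F₀] E := AlgEquiv.restrictNormalHom E τ with htdef
    have L1 : ∀ θ : Ω ≃ₐ[F] Ω, AlgEquiv.restrictScalars F₀ (AlgEquiv.restrictNormalHom E θ) =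
        AlgEquiv.restrictNormalHom E (AlgEquiv.restrictScalars F₀ θ) :=
      fun θ => aux_restrictScalars_restrictNormalHom F₀ F E Ω θ
    have htns : t ∉ Subgroup.zpowers s₀ := by
      intro hmem
      rw [Subgroup.mem_zpowers_iff] at hmem
      obtain ⟨k, hk⟩ := hmem
      apply hτ
      rw [← aux_restrictNormalHom_comp F₀ F E Ω τ, ← htdef, ← hk, map_zpow, hs₀F, one_zpow]
    obtain ⟨ht2, hconj⟩ := aux_dihedral_s10 hm e s₀ t hords₀ htns
    constructor
    · intro θ θ' hrel
      obtain ⟨n, hn⟩ := Subgroup.mem_zpowers_iff.mp (hσ (AlgEquiv.restrictNormalHom E θ))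
      have key : AlgEquiv.restrictScalars F₀ (AlgEquiv.restrictNormalHom E θ')
          = AlgEquiv.restrictScalars F₀ (σ ^ (-n)) := by
        rw [L1, hrel, map_mul, map_mul, map_inv, ← htdef]
        rw [← L1 θ, ← hn]
        have h1 : AlgEquiv.restrictScalars F₀ (σ ^ n) = s₀ ^ n := map_zpow resSc σ n
        have h2 : AlgEquiv.restrictScalars F₀ (σ ^ (-n)) = s₀ ^ (-n) := map_zpow resSc σ (-n)
        rw [h1, h2]
        calc t * s₀ ^ n * t⁻¹ = (t * s₀ * t⁻¹) ^ n := (conj_zpow).symm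
          _ = (s₀⁻¹) ^ n := by rw [hconj]
          _ = s₀ ^ (-n) := by rw [inv_zpow, zpow_neg]
      have h3 : AlgEquiv.restrictNormalHom E θ' = σ ^ (-n) :=
        AlgEquiv.restrictScalars_injective F₀ key
      rw [h3, ← hn, ← map_mul, ← zpow_add, neg_add_cancel, zpow_zero, map_one]
    · intro θ hrel
      have key : AlgEquiv.restrictScalars F₀ (AlgEquiv.restrictNormalHom E θ)
          = AlgEquiv.restrictScalars F₀ (1 : E ≃ₐ[F] E) := by
        rw [L1, hrel, map_pow, ← htdef, ht2]
        exact (map_one resSc).symm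
      have h3 : AlgEquiv.restrictNormalHom E θ = 1 :=
        AlgEquiv.restrictScalars_injective F₀ key
      rw [h3, map_one]
end

section
/- Let F be a field, F/F₀ a quadratic extension with nontrivial automorphism τ₀, m ≥ 2 coprime to char(F₀), ρ ∈ F a primitive m-th root of unity, and a, b ∈ F₀^* with [F(a^{1/m}) : F] = m. Let A = (a, b)_m be the cyclic algebra over F generated by x, y with x^m = a, y^m = b, yx = ρxy. Then there exists an F/F₀-involution σ on A (i.e. an involution of the second kind restricting to τ₀ on F) with σ(x) = x and σ(y) = y if and only if N_{F/F₀}(ρ) = 1. -/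
theorem aux_invol {F₀ F : Type} [Field F₀] [Field F] [Algebra F₀ F]
    (hdim : Module.finrank F₀ F = 2) (τ₀ : F ≃ₐ[F₀] F) (z : F) : τ₀ (τ₀ z) = z := by
  classical
  have hfd : FiniteDimensional F₀ F := FiniteDimensional.of_finrank_pos (by omega)
  by_contra hzz
  have h1 : τ₀ z ≠ z := fun h => hzz (by rw [h, h])
  have h2 : τ₀ (τ₀ z) ≠ τ₀ z := fun h => h1 (τ₀.injective h)
  have hz2 : z ≠ τ₀ (τ₀ z) := fun h => hzz h.symm
  have hint : IsIntegral F₀ z := IsIntegral.of_finite F₀ z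
  set p := minpoly F₀ z with hp
  have hp0 : p ≠ 0 := minpoly.ne_zero hint
  set q := p.map (algebraMap F₀ F) with hq
  have hq0 : q ≠ 0 := Polynomial.map_ne_zero hp0
  have hroot : ∀ w : F, Polynomial.aeval w p = 0 → w ∈ q.roots := by
    intro w hw
    rw [Polynomial.mem_roots hq0]
    rwa [Polynomial.IsRoot, Polynomial.eval_map, ← Polynomial.aeval_def]
  have r1 : Polynomial.aeval z p = 0 := minpoly.aeval F₀ z
  have r2 : Polynomial.aeval (τ₀ z) p = 0 := by
    have h := Polynomial.aeval_algHom_apply (τ₀ : F →ₐ[F₀] F) z p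
    rw [r1, map_zero] at h
    simpa using h
  have r3 : Polynomial.aeval (τ₀ (τ₀ z)) p = 0 := by
    have h := Polynomial.aeval_algHom_apply (τ₀ : F →ₐ[F₀] F) (τ₀ z) p
    rw [r2, map_zero] at h
    simpa using h
  have hsub : ({z, τ₀ z, τ₀ (τ₀ z)} : Finset F) ⊆ q.roots.toFinset := by
    intro w hw
    rw [Multiset.mem_toFinset]
    simp only [Finset.mem_insert, Finset.mem_singleton] at hw
    rcases hw with rfl | rfl | rfl
    · exact hroot _ r1
    · exact hroot _ r2
    · exact hroot _ r3
  have hcard3 : ({z, τ₀ z, τ₀ (τ₀ z)} : Finset F).card = 3 :=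
    Finset.card_eq_three.mpr ⟨z, τ₀ z, τ₀ (τ₀ z), Ne.symm h1, hz2, Ne.symm h2, rfl⟩
  have hge : 3 ≤ q.natDegree := by
    calc 3 = ({z, τ₀ z, τ₀ (τ₀ z)} : Finset F).card := hcard3.symm
    _ ≤ q.roots.toFinset.card := Finset.card_le_card hsub
    _ ≤ Multiset.card q.roots := Multiset.toFinset_card_le _
    _ ≤ q.natDegree := Polynomial.card_roots' q
  have hle : q.natDegree ≤ 2 := by
    rw [hq, Polynomial.natDegree_map]
    calc p.natDegree ≤ Module.finrank F₀ F := minpoly.natDegree_le z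
    _ = 2 := hdim
  omega


/-- Let `F/F₀` be quadratic with nontrivial automorphism `τ₀`, `ρ ∈ F` a primitive
`m`-th root of unity, `a, b ∈ F₀^*` with `X^m - a` irreducible over `F`, and
`A = (a, b)_m` the symbol algebra generated by `x, y` with `x^m = a`, `y^m = b`,
`yx = ρxy`.  Then there exists an `F/F₀`-involution `σ` on `A` (an anti-automorphism of
order 2 restricting to `τ₀` on `F`) with `σ(x) = x` and `σ(y) = y` iff
`N_{F/F₀}(ρ) = ρ·τ₀(ρ) = 1`. -/
theorem stmt_17 (F₀ F : Type) [Field F₀] [Field F] [Algebra F₀ F]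
    (hdim : Module.finrank F₀ F = 2)
    (τ₀ : F ≃ₐ[F₀] F) (hτ₀ : τ₀ ≠ AlgEquiv.refl)
    (m : ℕ) (hm : 2 ≤ m) (hchar : ((2 * m : ℕ) : F₀) ≠ 0)
    (ρ : F) (hρ : IsPrimitiveRoot ρ m)
    (a b : F₀) (ha : a ≠ 0) (hb : b ≠ 0)
    (hirr : Irreducible (Polynomial.X ^ m - Polynomial.C (algebraMap F₀ F a)))
    (A : Type) [Ring A] [Algebra F A] (hA : Module.finrank F A = m * m)
    (x y : A)
    (hx : x ^ m = algebraMap F A (algebraMap F₀ F a))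
    (hy : y ^ m = algebraMap F A (algebraMap F₀ F b))
    (hcomm : y * x = algebraMap F A ρ * (x * y))
    (hgen : Algebra.adjoin F ({x, y} : Set A) = ⊤) :
    (∃ σ : A → A,
      (∀ z w : A, σ (z + w) = σ z + σ w) ∧
      (∀ z w : A, σ (z * w) = σ w * σ z) ∧
      (∀ z : A, σ (σ z) = z) ∧
      (∀ c : F, σ (algebraMap F A c) = algebraMap F A (τ₀ c)) ∧
      σ x = x ∧ σ y = y) ↔ ρ * τ₀ ρ = 1 := by
  classical
  have hm0 : 0 < m := by omega
  have hρm : ρ ^ m = 1 := hρ.pow_eq_one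
  have hNontriv : Nontrivial A :=
    Module.nontrivial_of_finrank_pos (R := F) (by rw [hA]; exact Nat.mul_pos hm0 hm0)
  have haF : algebraMap F₀ F a ≠ 0 :=
    fun h => ha ((algebraMap F₀ F).injective (by rw [h, map_zero]))
  have hbF : algebraMap F₀ F b ≠ 0 :=
    fun h => hb ((algebraMap F₀ F).injective (by rw [h, map_zero]))
  have hyx : y * x = ρ • (x * y) := by rw [hcomm, Algebra.smul_def]
  have L1 : ∀ k : ℕ, y * x ^ k = ρ ^ k • (x ^ k * y) := by
    intro k
    induction k with
    | zero => simp
    | succ n ih =>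
      calc y * x ^ (n + 1) = (y * x ^ n) * x := by rw [pow_succ, ← mul_assoc]
      _ = (ρ ^ n • (x ^ n * y)) * x := by rw [ih]
      _ = ρ ^ n • (x ^ n * (y * x)) := by rw [smul_mul_assoc, mul_assoc]
      _ = ρ ^ n • (x ^ n * (ρ • (x * y))) := by rw [hyx]
      _ = ρ ^ (n + 1) • (x ^ (n + 1) * y) := by
        rw [mul_smul_comm, smul_smul, ← pow_succ, ← mul_assoc, ← pow_succ]
  have L2 : ∀ j k : ℕ, y ^ j * x ^ k = ρ ^ (j * k) • (x ^ k * y ^ j) := by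
    intro j
    induction j with
    | zero => intro k; simp
    | succ n ih =>
      intro k
      calc y ^ (n + 1) * x ^ k = y ^ n * (y * x ^ k) := by rw [pow_succ, mul_assoc]
      _ = y ^ n * (ρ ^ k • (x ^ k * y)) := by rw [L1]
      _ = ρ ^ k • ((y ^ n * x ^ k) * y) := by rw [mul_smul_comm, ← mul_assoc]
      _ = ρ ^ k • ((ρ ^ (n * k) • (x ^ k * y ^ n)) * y) := by rw [ih]
      _ = (ρ ^ k * ρ ^ (n * k)) • (x ^ k * y ^ (n + 1)) := by
        rw [smul_mul_assoc, smul_smul, mul_assoc, ← pow_succ]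
      _ = ρ ^ ((n + 1) * k) • (x ^ k * y ^ (n + 1)) := by
        rw [← pow_add]; congr 1; ring
  have Lmul : ∀ i j k l : ℕ,
      (x ^ i * y ^ j) * (x ^ k * y ^ l) = ρ ^ (j * k) • (x ^ (i + k) * y ^ (j + l)) := by
    intro i j k l
    calc (x ^ i * y ^ j) * (x ^ k * y ^ l) = x ^ i * ((y ^ j * x ^ k) * y ^ l) := by
          rw [mul_assoc, ← mul_assoc (y ^ j)]
    _ = x ^ i * ((ρ ^ (j * k) • (x ^ k * y ^ j)) * y ^ l) := by rw [L2]
    _ = ρ ^ (j * k) • (x ^ (i + k) * y ^ (j + l)) := by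
        rw [smul_mul_assoc, mul_smul_comm]
        congr 1
        rw [mul_assoc (x ^ k) (y ^ j) (y ^ l), ← mul_assoc (x ^ i) (x ^ k), ← pow_add, ← pow_add]
  have Lred : ∀ i j : ℕ, x ^ i * y ^ j =
      ((algebraMap F₀ F a) ^ (i / m) * (algebraMap F₀ F b) ^ (j / m)) •
        (x ^ (i % m) * y ^ (j % m)) := by
    intro i j
    have hxr : x ^ i = (algebraMap F₀ F a) ^ (i / m) • x ^ (i % m) := by
      conv_lhs => rw [← Nat.div_add_mod i m]
      rw [pow_add, pow_mul, hx, ← map_pow, Algebra.smul_def]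
    have hyr : y ^ j = (algebraMap F₀ F b) ^ (j / m) • y ^ (j % m) := by
      conv_lhs => rw [← Nat.div_add_mod j m]
      rw [pow_add, pow_mul, hy, ← map_pow, Algebra.smul_def]
    rw [hxr, hyr, smul_mul_smul_comm]
  have hpowmod : ∀ s : ℕ, ρ ^ s = ρ ^ (s % m) := by
    intro s
    conv_lhs => rw [← Nat.div_add_mod s m]
    rw [pow_add, pow_mul, hρm, one_pow, one_mul]
  constructor
  · -- forward direction
    rintro ⟨σ, hadd, hmul, hinv, hsc, hsx, hsy⟩
    have hxyne : x * y ≠ 0 := by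
      intro h0
      have hy0 : y = 0 := by
        have h2 : x ^ (m - 1) * (x * y) = 0 := by rw [h0, mul_zero]
        have h3 : x ^ m * y = 0 := by
          conv_lhs => rw [show m = (m - 1) + 1 from (by omega), pow_succ]
          rw [mul_assoc]; exact h2
        rw [hx] at h3
        have h4 := congrArg (fun t => algebraMap F A (algebraMap F₀ F a)⁻¹ * t) h3
        simp only [mul_zero, ← mul_assoc, ← map_mul] at h4
        rw [inv_mul_cancel₀ haF, map_one, one_mul] at h4
        exact h4
      have h5 : algebraMap F A (algebraMap F₀ F b) = 0 := by
        rw [← hy, hy0, zero_pow (by omega : m ≠ 0)]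
      exact hbF ((algebraMap F A).injective (by rw [h5, map_zero]))
    have hA1 : σ (y * x) = x * y := by rw [hmul, hsx, hsy]
    have hA2 : σ (y * x) = (τ₀ ρ * ρ) • (x * y) := by
      calc σ (y * x) = σ (algebraMap F A ρ * (x * y)) := by rw [hcomm]
      _ = σ (x * y) * σ (algebraMap F A ρ) := hmul _ _
      _ = (σ y * σ x) * algebraMap F A (τ₀ ρ) := by rw [hmul, hsc]
      _ = (y * x) * algebraMap F A (τ₀ ρ) := by rw [hsx, hsy]
      _ = algebraMap F A (τ₀ ρ) * (y * x) := (Algebra.commutes _ _).symm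
      _ = algebraMap F A (τ₀ ρ) * (algebraMap F A ρ * (x * y)) := by rw [hcomm]
      _ = (τ₀ ρ * ρ) • (x * y) := by rw [← mul_assoc, ← map_mul, Algebra.smul_def]
    have heq : x * y = (τ₀ ρ * ρ) • (x * y) := hA1.symm.trans hA2
    have hone : (1 - τ₀ ρ * ρ) • (x * y) = 0 := by
      rw [sub_smul, one_smul, ← heq, sub_self]
    have hzero : (1 : F) - τ₀ ρ * ρ = 0 := by
      by_contra hc
      apply hxyne
      have h4 := congrArg (fun t => (1 - τ₀ ρ * ρ)⁻¹ • t) hone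
      simpa [smul_smul, inv_mul_cancel₀ hc] using h4
    rw [mul_comm]
    exact (sub_eq_zero.mp hzero).symm
  · -- backward direction
    intro hN
    set e : Fin m × Fin m → A := fun p => x ^ ((p.1 : ℕ)) * y ^ ((p.2 : ℕ)) with he
    set S : Submodule F A := Submodule.span F (Set.range e) with hSdef
    have memS : ∀ i j : ℕ, x ^ i * y ^ j ∈ S := by
      intro i j
      rw [Lred i j]
      refine Submodule.smul_mem _ _ (Submodule.subset_span ?_)
      exact ⟨(⟨i % m, Nat.mod_lt _ hm0⟩, ⟨j % m, Nat.mod_lt _ hm0⟩), rfl⟩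
    have hS1 : (1 : A) ∈ S := by simpa using memS 0 0
    have hkeymem : ∀ p q : Fin m × Fin m, e p * e q ∈ S := by
      intro p q
      show (x ^ ((p.1 : ℕ)) * y ^ ((p.2 : ℕ))) * (x ^ ((q.1 : ℕ)) * y ^ ((q.2 : ℕ))) ∈ S
      rw [Lmul]
      exact Submodule.smul_mem _ _ (memS _ _)
    have hSmul : ∀ z w : A, z ∈ S → w ∈ S → z * w ∈ S := by
      have hSS : S * S ≤ S := by
        rw [hSdef, Submodule.span_mul_span]
        refine Submodule.span_le.mpr ?_
        rintro u ⟨_, ⟨p, rfl⟩, _, ⟨q, rfl⟩, rfl⟩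
        exact hkeymem p q
      intro z w hz hw
      exact hSS (Submodule.mul_mem_mul hz hw)
    have hxS : x ∈ S := by simpa using memS 1 0
    have hyS : y ∈ S := by simpa using memS 0 1
    have hspan : ⊤ ≤ S := by
      have hT : Algebra.adjoin F ({x, y} : Set A) ≤ S.toSubalgebra hS1 hSmul := by
        apply Algebra.adjoin_le
        rintro t ht
        simp only [Set.mem_insert_iff, Set.mem_singleton_iff] at ht
        rcases ht with rfl | rfl
        · exact hxS
        · exact hyS
      intro z _
      have hz : z ∈ Algebra.adjoin F ({x, y} : Set A) := by rw [hgen]; trivial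
      exact hT hz
    have hcard : Fintype.card (Fin m × Fin m) = Module.finrank F A := by
      simp [hA]
    let B : Module.Basis (Fin m × Fin m) F A := basisOfTopLeSpanOfCardEqFinrank e hspan hcard
    have hB : ⇑B = e := coe_basisOfTopLeSpanOfCardEqFinrank e hspan hcard
    set σ : A → A :=
      fun z => ∑ p : Fin m × Fin m, (τ₀ (B.repr z p) * ρ ^ ((p.1 : ℕ) * (p.2 : ℕ))) • e p
      with hσdef
    have hadd : ∀ z w : A, σ (z + w) = σ z + σ w := by
      intro z w
      simp only [hσdef, map_add, Finsupp.coe_add, Pi.add_apply, add_mul, add_smul,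
        Finset.sum_add_distrib]
    have hzero : σ 0 = 0 := by
      simp [hσdef]
    have hsmul : ∀ (c : F) (z : A), σ (c • z) = τ₀ c • σ z := by
      intro c z
      simp only [hσdef, map_smul, Finsupp.coe_smul, Pi.smul_apply, smul_eq_mul, map_mul,
        Finset.smul_sum]
      refine Finset.sum_congr rfl fun p _ => ?_
      rw [smul_smul, mul_assoc]
    have hsum : ∀ (s : Finset (Fin m × Fin m)) (f : (Fin m × Fin m) → A),
        σ (∑ i ∈ s, f i) = ∑ i ∈ s, σ (f i) := by
      intro s f
      induction s using Finset.induction_on with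
      | empty => simpa using hzero
      | insert _ _ hns ih => rw [Finset.sum_insert hns, hadd, ih, Finset.sum_insert hns]
    have hrep : ∀ z : A, z = ∑ p : Fin m × Fin m, B.repr z p • e p := by
      intro z
      have h := (B.sum_repr z).symm
      simpa [hB] using h
    have hreprsum : ∀ (c : (Fin m × Fin m) → F) (q : Fin m × Fin m),
        B.repr (∑ p : Fin m × Fin m, c p • e p) q = c q := by
      intro c q
      have h := congrFun (Module.Basis.repr_sum_self B c) q
      simpa [hB] using h
    have hσe : ∀ p : Fin m × Fin m, σ (e p) = ρ ^ ((p.1 : ℕ) * (p.2 : ℕ)) • e p := by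
      intro p
      have hrp : ∀ q, B.repr (e p) q = if p = q then (1 : F) else 0 := by
        intro q
        rw [← hB, Module.Basis.repr_self]
        exact Finsupp.single_apply
      rw [hσdef]
      simp only [hrp, apply_ite τ₀, map_one, map_zero, ite_mul, zero_mul, one_mul, ite_smul,
        zero_smul]
      rw [Finset.sum_ite_eq (Finset.univ : Finset (Fin m × Fin m)) p
        (fun q => ρ ^ ((q.1 : ℕ) * (q.2 : ℕ)) • e q)]
      simp
    have hσc : ∀ c : (Fin m × Fin m) → F,
        σ (∑ p : Fin m × Fin m, c p • e p) = ∑ p : Fin m × Fin m, τ₀ (c p) • σ (e p) := by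
      intro c
      rw [hsum]
      exact Finset.sum_congr rfl fun p _ => hsmul _ _
    -- the key anti-multiplicativity on basis elements
    have hτρpow : ∀ n : ℕ, τ₀ ρ ^ n * ρ ^ n = 1 := by
      intro n
      rw [← mul_pow, mul_comm (τ₀ ρ) ρ, hN, one_pow]
    have hkey : ∀ p q : Fin m × Fin m, σ (e p * e q) = σ (e q) * σ (e p) := by
      rintro ⟨i, j⟩ ⟨k, l⟩
      set C : F := (algebraMap F₀ F a) ^ (((i : ℕ) + k) / m) *
        (algebraMap F₀ F b) ^ (((j : ℕ) + l) / m) with hC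
      have hτC : τ₀ C = C := by
        rw [hC]
        simp [map_mul, map_pow, AlgEquiv.commutes]
      set r : Fin m × Fin m :=
        (⟨((i : ℕ) + k) % m, Nat.mod_lt _ hm0⟩, ⟨((j : ℕ) + l) % m, Nat.mod_lt _ hm0⟩) with hr
      have her : x ^ (((i : ℕ) + k) % m) * y ^ (((j : ℕ) + l) % m) = e r := rfl
      have hepq : e (i, j) * e (k, l) = (ρ ^ ((j : ℕ) * k) * C) • e r := by
        show (x ^ ((i : ℕ)) * y ^ ((j : ℕ))) * (x ^ ((k : ℕ)) * y ^ ((l : ℕ))) = _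
        rw [Lmul, Lred, her, smul_smul]
      have heqp : e (k, l) * e (i, j) = (ρ ^ ((l : ℕ) * i) * C) • e r := by
        show (x ^ ((k : ℕ)) * y ^ ((l : ℕ))) * (x ^ ((i : ℕ)) * y ^ ((j : ℕ))) = _
        rw [Lmul, show (k : ℕ) + i = (i : ℕ) + k from add_comm _ _,
          show (l : ℕ) + j = (j : ℕ) + l from add_comm _ _, Lred, her, smul_smul]
      have hmodpow : ρ ^ ((((i : ℕ) + k) % m) * ((((j : ℕ) + l)) % m)) =
          ρ ^ (((i : ℕ) + k) * ((j : ℕ) + l)) := by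
        rw [hpowmod, hpowmod (((i : ℕ) + k) * ((j : ℕ) + l))]
        congr 1
        exact Nat.ModEq.mul (Nat.mod_modEq _ _) (Nat.mod_modEq _ _)
      have hscal : τ₀ ρ ^ ((j : ℕ) * k) * C * ρ ^ ((((i : ℕ) + k) % m) * ((((j : ℕ) + l)) % m)) =
          (ρ ^ ((k : ℕ) * l) * ρ ^ ((i : ℕ) * j)) * (ρ ^ ((l : ℕ) * i) * C) := by
        rw [hmodpow]
        have hexp : ((i : ℕ) + k) * ((j : ℕ) + l) =
            (j : ℕ) * k + ((k : ℕ) * l + (i : ℕ) * j + (l : ℕ) * i) := by ring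
        rw [hexp, pow_add, pow_add, pow_add]
        linear_combination (ρ ^ ((k : ℕ) * l) * ρ ^ ((i : ℕ) * j) * ρ ^ ((l : ℕ) * i) * C) *
          hτρpow ((j : ℕ) * k)
      calc σ (e (i, j) * e (k, l)) = τ₀ (ρ ^ ((j : ℕ) * k) * C) • σ (e r) := by
            rw [hepq, hsmul]
      _ = (τ₀ ρ ^ ((j : ℕ) * k) * C * ρ ^ ((((i : ℕ) + k) % m) * ((((j : ℕ) + l)) % m))) • e r := by
            rw [hσe r, smul_smul, map_mul, map_pow, hτC]
      _ = ((ρ ^ ((k : ℕ) * l) * ρ ^ ((i : ℕ) * j)) * (ρ ^ ((l : ℕ) * i) * C)) • e r := by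
            rw [hscal]
      _ = σ (e (k, l)) * σ (e (i, j)) := by
            rw [hσe (k, l), hσe (i, j), smul_mul_smul_comm, heqp, smul_smul]
    -- general anti-multiplicativity
    have hmulσ : ∀ z w : A, σ (z * w) = σ w * σ z := by
      intro z w
      have expand : z * w = ∑ p : Fin m × Fin m, ∑ q : Fin m × Fin m,
          (B.repr z p * B.repr w q) • (e p * e q) := by
        conv_lhs => rw [hrep z, hrep w]
        rw [Finset.sum_mul_sum]
        exact Finset.sum_congr rfl fun p _ => Finset.sum_congr rfl fun q _ =>
          (smul_mul_smul_comm _ _ _ _)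
      have lhs : σ (z * w) = ∑ p : Fin m × Fin m, ∑ q : Fin m × Fin m,
          (τ₀ (B.repr z p) * τ₀ (B.repr w q)) • (σ (e q) * σ (e p)) := by
        rw [expand, hsum]
        refine Finset.sum_congr rfl fun p _ => ?_
        rw [hsum]
        refine Finset.sum_congr rfl fun q _ => ?_
        rw [hsmul, hkey, map_mul]
      have rhs : σ w * σ z = ∑ q : Fin m × Fin m, ∑ p : Fin m × Fin m,
          (τ₀ (B.repr w q) * τ₀ (B.repr z p)) • (σ (e q) * σ (e p)) := by
        conv_lhs => rw [hrep z, hrep w, hσc, hσc]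
        rw [Finset.sum_mul_sum]
        exact Finset.sum_congr rfl fun q _ => Finset.sum_congr rfl fun p _ =>
          (smul_mul_smul_comm _ _ _ _)
      rw [lhs, rhs, Finset.sum_comm]
      exact Finset.sum_congr rfl fun p _ => Finset.sum_congr rfl fun q _ => by
        rw [mul_comm]
    -- involution
    have hττ : ∀ c : F, τ₀ (τ₀ c) = c := aux_invol hdim τ₀
    have hinvσ : ∀ z : A, σ (σ z) = z := by
      intro z
      set c' : (Fin m × Fin m) → F :=
        fun p => τ₀ (B.repr z p) * ρ ^ ((p.1 : ℕ) * (p.2 : ℕ)) with hc'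
      have h1 : σ z = ∑ p : Fin m × Fin m, c' p • e p := by rw [hσdef]
      have h2 : ∀ q, B.repr (σ z) q = c' q := by
        intro q
        rw [h1]
        exact hreprsum c' q
      conv_lhs => rw [hσdef]
      simp only [h2]  -- hopefully rewrites repr (σ z) q
      conv_rhs => rw [hrep z]
      refine Finset.sum_congr rfl fun p _ => ?_
      simp only [hreprsum]
      simp only [map_mul, map_pow, hττ]
      rw [mul_assoc, ← mul_pow, mul_comm (τ₀ ρ) ρ, hN, one_pow, mul_one]
    -- algebraMap compatibility
    have h1e : (1 : A) = e (⟨0, hm0⟩, ⟨0, hm0⟩) := by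
      show (1 : A) = x ^ ((0 : ℕ)) * y ^ ((0 : ℕ))
      simp
    have hσ1 : σ 1 = 1 := by
      rw [h1e, hσe]
      simp [← h1e]
    have hscσ : ∀ c : F, σ (algebraMap F A c) = algebraMap F A (τ₀ c) := by
      intro c
      rw [Algebra.algebraMap_eq_smul_one c, hsmul, hσ1, Algebra.algebraMap_eq_smul_one]
    have hxe : x = e (⟨1, by omega⟩, ⟨0, hm0⟩) := by
      show x = x ^ ((1 : ℕ)) * y ^ ((0 : ℕ))
      simp
    have hσx : σ x = x := by
      rw [hxe, hσe]
      simp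
    have hye : y = e (⟨0, hm0⟩, ⟨1, by omega⟩) := by
      show y = x ^ ((0 : ℕ)) * y ^ ((1 : ℕ))
      simp
    have hσy : σ y = y := by
      rw [hye, hσe]
      simp
    exact ⟨σ, hadd, hmulσ, hinvσ, hscσ, hσx, hσy⟩
end
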